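/- arXiv:1306.4821 — 4 statements merged into one kernel-verified Lean document; each statement's English description precedes it below -/
import Mathlib

section
/- Let (W,S) be a Coxeter system such that the parabolic subgroup W_J is finite for every proper subset J ⊊ S. Let Γ be a connected W-digraph with finite vertex set, and suppose the H-module M(Γ) is isomorphic to the H-module afforded by some W-graph over ℚ. Then Γ is acyclic. -/
open Finsupp

set_option synthInstance.maxHeartbeats 1000000
set_option maxHeartbeats 1000000

noncomputable section

/-- The field `ℚ(u)` of rational functions. -/
abbrev Kq : Type := RatFunc ℚ

/-- The indeterminate `u`. -/
def uu : Kq := RatFunc.X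

/-- An `S`-labeled digraph on vertex type `V` with labels in `B`:
`Edge a b s d` means there is an edge from `a` to `b` labeled `s`, which is
dashed if `d = true` and solid if `d = false`.  There are no loops, and every
vertex occurs in exactly one edge with any given label. -/
structure SLabeledDigraph (V B : Type*) where
  Edge : V → V → B → Bool → Prop
  no_loop : ∀ v s d, ¬ Edge v v s d
  unique_edge : ∀ v s, ∃! e : V × V × Bool,
    (e.1 = v ∨ e.2.1 = v) ∧ Edge e.1 e.2.1 s e.2.2

namespace SLabeledDigraph

variable {V B : Type*} (Γ : SLabeledDigraph V B)

/-- Swap the endpoints of an edge datum. -/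
def eswap {V : Type*} (e : V × V × Bool) : V × V × Bool := (e.2.1, e.1, e.2.2)

/-- The reversed digraph `Γ_rev`, with all edge directions reversed but types
and labels kept. -/
def rev : SLabeledDigraph V B where
  Edge a b s d := Γ.Edge b a s d
  no_loop v s d := Γ.no_loop v s d
  unique_edge v s := by
    obtain ⟨e, ⟨hinc, hedge⟩, huniq⟩ := Γ.unique_edge v s
    refine ⟨eswap e, ⟨Or.symm hinc, hedge⟩, ?_⟩
    rintro e' ⟨hinc', hedge'⟩
    have h1 : eswap e' = e := huniq (eswap e') ⟨Or.symm hinc', hedge'⟩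
    calc e' = eswap (eswap e') := rfl
    _ = eswap e := by rw [h1]

/-- The restriction `Γ_J`: same vertices, only edges with labels in `J`. -/
def restrict (J : Set B) : SLabeledDigraph V J where
  Edge a b s d := Γ.Edge a b s.1 d
  no_loop v s d := Γ.no_loop v s.1 d
  unique_edge v s := Γ.unique_edge v s.1

/-- Directed adjacency (ignoring labels and edge types). -/
def DAdj (a b : V) : Prop := ∃ s d, Γ.Edge a b s d

/-- Undirected adjacency. -/
def UAdj (a b : V) : Prop := Γ.DAdj a b ∨ Γ.DAdj b a

/-- `Γ` is connected if any two vertices are joined by an undirected path. -/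
def Connected : Prop := ∀ a b : V, Relation.ReflTransGen Γ.UAdj a b

/-- A source is a vertex at which no edge ends. -/
def IsSource (a : V) : Prop := ∀ b s d, ¬ Γ.Edge b a s d

/-- A sink is a vertex at which no edge begins. -/
def IsSink (a : V) : Prop := ∀ b s d, ¬ Γ.Edge a b s d

/-- `Γ` is acyclic if it has no nonempty directed circuit. -/
def Acyclic : Prop := ∀ a : V, ¬ Relation.TransGen Γ.DAdj a a

/-- The setoid whose classes are the connected components of `Γ`. -/
def compSetoid : Setoid V :=
  ⟨Relation.ReflTransGen Γ.UAdj,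
    ⟨fun _ => Relation.ReflTransGen.refl,
     fun h => by
       induction h with
       | refl => exact Relation.ReflTransGen.refl
       | tail _ hbc ih => exact Relation.ReflTransGen.head (Or.symm hbc) ih,
     fun h1 h2 => Relation.ReflTransGen.trans h1 h2⟩⟩

end SLabeledDigraph

/-- The Hecke algebra of a Coxeter system over `ℚ(u)`: an associative
`ℚ(u)`-algebra `H` with basis `{T_w : w ∈ W}` such that `T_1 = 1` and
`T_s T_w = T_{sw}` if `ℓ(sw) > ℓ(w)`, while
`T_s T_w = u² T_{sw} + (u² - 1) T_w` if `ℓ(sw) < ℓ(w)`. -/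
structure HeckeAlgebra {B W : Type*} [Group W] {M : CoxeterMatrix B}
    (cs : CoxeterSystem M W) (H : Type*) [Ring H] [Algebra Kq H] where
  T : W → H
  basis : Module.Basis W Kq H
  basis_eq : ∀ w, basis w = T w
  T_one : T 1 = 1
  T_mul_of_lt : ∀ (i : B) (w : W), cs.length w < cs.length (cs.simple i * w) →
    T (cs.simple i) * T w = T (cs.simple i * w)
  T_mul_of_gt : ∀ (i : B) (w : W), cs.length (cs.simple i * w) < cs.length w →
    T (cs.simple i) * T w = (uu ^ 2) • T (cs.simple i * w) + (uu ^ 2 - 1) • T w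

namespace WdigraphAux

/-- `r` has no pole at `u = 0`. -/
def Int0 (r : Kq) : Prop :=
  ∃ p q : Polynomial ℚ, q.coeff 0 ≠ 0 ∧
    r * algebraMap (Polynomial ℚ) Kq q = algebraMap (Polynomial ℚ) Kq p

lemma int0_poly (p : Polynomial ℚ) : Int0 (algebraMap (Polynomial ℚ) Kq p) :=
  ⟨p, 1, by simp, by simp⟩

lemma int0_uu : Int0 uu := by
  have h : uu = algebraMap (Polynomial ℚ) Kq Polynomial.X := (RatFunc.algebraMap_X (K := ℚ)).symm
  rw [h]; exact int0_poly _

lemma int0_one : Int0 (1 : Kq) := by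
  have h : (1 : Kq) = algebraMap (Polynomial ℚ) Kq 1 := by simp
  rw [h]; exact int0_poly _

lemma int0_zero : Int0 (0 : Kq) := by
  have h : (0 : Kq) = algebraMap (Polynomial ℚ) Kq 0 := by simp
  rw [h]; exact int0_poly _

lemma int0_add {r s : Kq} (hr : Int0 r) (hs : Int0 s) : Int0 (r + s) := by
  obtain ⟨p1, q1, hq1, he1⟩ := hr
  obtain ⟨p2, q2, hq2, he2⟩ := hs
  refine ⟨p1 * q2 + p2 * q1, q1 * q2, by rw [Polynomial.mul_coeff_zero]; exact mul_ne_zero hq1 hq2, ?_⟩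
  simp only [map_mul, map_add]
  linear_combination (algebraMap (Polynomial ℚ) Kq q2) * he1 + (algebraMap (Polynomial ℚ) Kq q1) * he2

lemma int0_mul {r s : Kq} (hr : Int0 r) (hs : Int0 s) : Int0 (r * s) := by
  obtain ⟨p1, q1, hq1, he1⟩ := hr
  obtain ⟨p2, q2, hq2, he2⟩ := hs
  refine ⟨p1 * p2, q1 * q2, by rw [Polynomial.mul_coeff_zero]; exact mul_ne_zero hq1 hq2, ?_⟩
  simp only [map_mul]
  linear_combination (s * algebraMap (Polynomial ℚ) Kq q2) * he1
    + (algebraMap (Polynomial ℚ) Kq p1) * he2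

lemma int0_neg {r : Kq} (hr : Int0 r) : Int0 (-r) := by
  obtain ⟨p1, q1, hq1, he1⟩ := hr
  exact ⟨-p1, q1, hq1, by simp only [map_neg]; linear_combination -he1⟩

lemma int0_sum {α : Type*} (s : Finset α) (f : α → Kq) (h : ∀ a ∈ s, Int0 (f a)) :
    Int0 (∑ a ∈ s, f a) :=
  Finset.sum_induction f Int0 (fun _ _ ha hb => int0_add ha hb) int0_zero h

lemma int0_rat (c : ℚ) : Int0 (algebraMap ℚ Kq c) := by
  have h : algebraMap ℚ Kq c = algebraMap (Polynomial ℚ) Kq (Polynomial.C c) := by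
    rw [RatFunc.algebraMap_C, eq_ratCast (algebraMap ℚ Kq), eq_ratCast (RatFunc.C (K := ℚ))]
  rw [h]; exact int0_poly _

lemma uu_add_one_ne_zero : uu + 1 ≠ (0 : Kq) := by
  have h : uu + 1 = algebraMap (Polynomial ℚ) Kq (Polynomial.X + 1) := by
    simp [uu, map_add]
  rw [h]
  intro hc
  have h2 : (Polynomial.X + 1 : Polynomial ℚ) = 0 := by
    apply RatFunc.algebraMap_injective
    rw [hc]; simp
  have h3 : (Polynomial.X + 1 : Polynomial ℚ).coeff 0 = 1 := by simp
  rw [h2] at h3; simp at h3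

lemma int0_inv_uu_add_one : Int0 (uu + 1)⁻¹ := by
  refine ⟨1, Polynomial.X + 1, by simp, ?_⟩
  have h : algebraMap (Polynomial ℚ) Kq (Polynomial.X + 1) = uu + 1 := by simp [uu, map_add]
  rw [h, map_one, inv_mul_cancel₀ uu_add_one_ne_zero]

lemma int0_uu_sub_one : Int0 (uu - 1) := by
  have h : uu - 1 = algebraMap (Polynomial ℚ) Kq (Polynomial.X - 1) := by
    simp [uu, map_sub]
  rw [h]; exact int0_poly _

lemma poly_split : ∀ (N : ℕ) (q : Polynomial ℚ), q ≠ 0 → q.natDegree ≤ N →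
    ∃ (n : ℕ) (q' : Polynomial ℚ), q = Polynomial.X ^ n * q' ∧ q'.coeff 0 ≠ 0 := by
  intro N
  induction N with
  | zero =>
    intro q hq hdeg
    refine ⟨0, q, by simp, ?_⟩
    intro hc
    have hx : Polynomial.X ∣ q := Polynomial.X_dvd_iff.mpr hc
    have := Polynomial.natDegree_le_of_dvd hx hq
    simp [Polynomial.natDegree_X] at this
    omega
  | succ N ih =>
    intro q hq hdeg
    by_cases hc : q.coeff 0 ≠ 0
    · exact ⟨0, q, by simp, hc⟩
    · push_neg at hc
      obtain ⟨q1, hq1⟩ := Polynomial.X_dvd_iff.mpr hc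
      have hq1ne : q1 ≠ 0 := by rintro rfl; simp at hq1; exact hq hq1
      have hdeg1 : q1.natDegree ≤ N := by
        have := Polynomial.natDegree_mul (p := (Polynomial.X : Polynomial ℚ)) (q := q1)
          Polynomial.X_ne_zero hq1ne
        rw [← hq1] at this
        rw [Polynomial.natDegree_X] at this
        omega
      obtain ⟨n, q', hsplit, hcoeff⟩ := ih q1 hq1ne hdeg1
      exact ⟨n + 1, q', by rw [hq1, hsplit, pow_succ]; ring, hcoeff⟩

lemma int0_exists_pow (r : Kq) : ∃ n : ℕ, Int0 (uu ^ n * r) := by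
  by_cases hr : r = 0
  · exact ⟨0, by rw [hr, mul_zero]; exact int0_zero⟩
  obtain ⟨n, q', hsplit, hcoeff⟩ := poly_split (r.denom.natDegree) r.denom (RatFunc.denom_ne_zero r) le_rfl
  refine ⟨n, r.num, q', hcoeff, ?_⟩
  have hd0 : algebraMap (Polynomial ℚ) Kq r.denom ≠ 0 :=
    (map_ne_zero_iff _ (RatFunc.algebraMap_injective ℚ)).mpr (RatFunc.denom_ne_zero r)
  have hbase : algebraMap (Polynomial ℚ) Kq r.num = r * algebraMap (Polynomial ℚ) Kq r.denom :=
    (div_eq_iff hd0).mp (RatFunc.num_div_denom r)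
  calc uu ^ n * r * algebraMap (Polynomial ℚ) Kq q'
      = r * algebraMap (Polynomial ℚ) Kq (Polynomial.X ^ n * q') := by
        simp only [map_mul, map_pow, RatFunc.algebraMap_X]; rw [uu]; ring
    _ = algebraMap (Polynomial ℚ) Kq r.num := by rw [← hsplit]; exact hbase.symm

lemma int0_mono {n m : ℕ} {r : Kq} (hnm : n ≤ m) (h : Int0 (uu ^ n * r)) :
    Int0 (uu ^ m * r) := by
  have : uu ^ m * r = uu ^ (m - n) * (uu ^ n * r) := by
    rw [← mul_assoc, ← pow_add]
    congr 2
    omega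
  rw [this]
  apply int0_mul _ h
  have hh : (uu : Kq) ^ (m - n) = algebraMap (Polynomial ℚ) Kq (Polynomial.X ^ (m - n)) := by
    simp [uu, map_pow]
  rw [hh]; exact int0_poly _

lemma eq_zero_of_forall_int0 (r : Kq)
    (h : ∀ m : ℕ, ∃ q, Int0 q ∧ r = uu ^ m * q) : r = 0 := by
  by_contra hr
  have hnum : r.num ≠ 0 := RatFunc.num_ne_zero hr
  set m := r.num.natDegree + 1 with hm
  obtain ⟨q, ⟨qp, qd, hqd, hqe⟩, hrq⟩ := h m
  have hd0 : algebraMap (Polynomial ℚ) Kq r.denom ≠ 0 :=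
    (map_ne_zero_iff _ (RatFunc.algebraMap_injective ℚ)).mpr (RatFunc.denom_ne_zero r)
  have hbase : algebraMap (Polynomial ℚ) Kq r.num = r * algebraMap (Polynomial ℚ) Kq r.denom :=
    (div_eq_iff hd0).mp (RatFunc.num_div_denom r)
  have hkey : algebraMap (Polynomial ℚ) Kq (r.num * qd)
      = algebraMap (Polynomial ℚ) Kq (Polynomial.X ^ m * (qp * r.denom)) := by
    simp only [map_mul, map_pow, RatFunc.algebraMap_X]
    calc algebraMap (Polynomial ℚ) Kq r.num * algebraMap (Polynomial ℚ) Kq qd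
        = (r * algebraMap (Polynomial ℚ) Kq r.denom) * algebraMap (Polynomial ℚ) Kq qd := by
          rw [← hbase]
      _ = (uu ^ m * (q * algebraMap (Polynomial ℚ) Kq qd)) * algebraMap (Polynomial ℚ) Kq r.denom := by
          rw [hrq]; ring
      _ = RatFunc.X ^ m * (algebraMap (Polynomial ℚ) Kq qp * algebraMap (Polynomial ℚ) Kq r.denom) := by
          rw [hqe, uu]; ring
  have hpoly : r.num * qd = Polynomial.X ^ m * (qp * r.denom) :=
    RatFunc.algebraMap_injective ℚ hkey
  have hdvd : (Polynomial.X : Polynomial ℚ) ^ m ∣ r.num * qd := ⟨_, hpoly⟩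
  have hnd : ¬ (Polynomial.X : Polynomial ℚ) ∣ qd := fun hx => hqd (Polynomial.X_dvd_iff.mp hx)
  have hdvd2 : (Polynomial.X : Polynomial ℚ) ^ m ∣ r.num :=
    (Polynomial.prime_X).pow_dvd_of_dvd_mul_right m hnd hdvd
  have := Polynomial.natDegree_le_of_dvd hdvd2 hnum
  rw [Polynomial.natDegree_X_pow] at this
  omega

open scoped Classical in
lemma core {Ψ : Type*} [Fintype Ψ] (k : ℕ) (hk : 0 < k)
    (F : ℕ → Ψ → Kq) (ii : ℕ → Ψ → Prop) (mu : Ψ → Ψ → Kq)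
    (c t : ℕ → Kq)
    (hFper : ∀ j x, F (j + k) x = F j x)
    (hiiper : ∀ j x, ii (j + k) x ↔ ii j x)
    (hmu : ∀ x y, Int0 (mu x y))
    (hcne : ∀ j, c j ≠ 0)
    (hcinv : ∀ j, Int0 (c j)⁻¹)
    (hcint : ∀ j, Int0 (c j))
    (hts : ∀ j, ∃ s : Kq, Int0 s ∧ uu ^ 2 - t j = uu * s)
    (hstep1 : ∀ j x, ¬ ii j x → c j * F (j+1) x = (uu ^ 2 - t j) * F j x)
    (hstep2 : ∀ j x, ii j x → c j * F (j+1) x = -(c j) * F j x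
        + uu * ∑ y ∈ Finset.univ.filter (fun y => ¬ ii j y), mu x y * F j y) :
    ∀ j x, (∃ j' < k, ¬ ii j' x) → F j x = 0 := by
  have hFn : ∀ (n j : ℕ) (x : Ψ), F (j + n * k) x = F j x := by
    intro n
    induction n with
    | zero => simp
    | succ n ih =>
      intro j x
      have h : j + (n + 1) * k = (j + n * k) + k := by ring
      rw [h, hFper, ih]
  have hFwrap : ∀ j x, F j x = F (j % k) x := by
    intro j x
    have h1 : j = j % k + (j / k) * k := (Nat.mod_add_div' j k).symm
    conv_lhs => rw [h1]
    exact hFn (j / k) (j % k) x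
  have hiin : ∀ (n j : ℕ) (x : Ψ), ii (j + n * k) x ↔ ii j x := by
    intro n
    induction n with
    | zero => simp
    | succ n ih =>
      intro j x
      have h : j + (n + 1) * k = (j + n * k) + k := by ring
      rw [h, hiiper, ih]
  have hiiwrap : ∀ j x, ii j x ↔ ii (j % k) x := by
    intro j x
    have h1 : j = j % k + (j / k) * k := (Nat.mod_add_div' j k).symm
    conv_lhs => rw [h1]
    exact hiin (j / k) (j % k) x
  have hex : ∀ p : Fin k × Ψ, ∃ n : ℕ, Int0 (uu ^ n * F (p.1 : ℕ) p.2) :=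
    fun p => int0_exists_pow _
  choose gN hgN using hex
  set M := Finset.univ.sup gN with hM
  have hbase : ∀ j x, Int0 (uu ^ M * F j x) := by
    intro j x
    have hlt : j % k < k := Nat.mod_lt _ hk
    have h1 : Int0 (uu ^ gN (⟨j % k, hlt⟩, x) * F (j % k) x) := hgN _
    have h2 : gN (⟨j % k, hlt⟩, x) ≤ M := Finset.le_sup (Finset.mem_univ _)
    have h3 := int0_mono h2 h1
    rwa [← hFwrap j x] at h3
  have main : ∀ m : ℕ, ∀ x, (∃ j' < k, ¬ ii j' x) →
      ∀ j, ∃ q, Int0 q ∧ uu ^ M * F j x = uu ^ m * q := by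
    intro m
    induction m with
    | zero =>
      intro x _ j
      exact ⟨uu ^ M * F j x, hbase j x, by rw [pow_zero, one_mul]⟩
    | succ m ih =>
      intro x hx
      obtain ⟨j₀, hj₀k, hj₀⟩ := hx
      have key1 : ∀ j, ¬ ii j x → ∃ q, Int0 q ∧ uu ^ M * F (j+1) x = uu ^ (m+1) * q := by
        intro j hnii
        obtain ⟨q0, hq0, he0⟩ := ih x ⟨j₀, hj₀k, hj₀⟩ j
        obtain ⟨s, hsint, hs⟩ := hts j
        refine ⟨(c j)⁻¹ * (s * q0), int0_mul (hcinv j) (int0_mul hsint hq0), ?_⟩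
        have h2 : c j * (uu ^ M * F (j+1) x) = uu ^ (m+1) * (s * q0) := by
          calc c j * (uu ^ M * F (j+1) x) = uu ^ M * (c j * F (j+1) x) := by ring
            _ = uu ^ M * ((uu ^ 2 - t j) * F j x) := by rw [hstep1 j x hnii]
            _ = (uu ^ 2 - t j) * (uu ^ M * F j x) := by ring
            _ = (uu * s) * (uu ^ m * q0) := by rw [hs, he0]
            _ = uu ^ (m+1) * (s * q0) := by ring
        calc uu ^ M * F (j+1) x = (c j)⁻¹ * (c j * (uu ^ M * F (j+1) x)) := by
              rw [inv_mul_cancel_left₀ (hcne j)]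
          _ = (c j)⁻¹ * (uu ^ (m+1) * (s * q0)) := by rw [h2]
          _ = uu ^ (m+1) * ((c j)⁻¹ * (s * q0)) := by ring
      have key2 : ∀ j, ii j x → (∃ q, Int0 q ∧ uu ^ M * F j x = uu ^ (m+1) * q) →
          ∃ q, Int0 q ∧ uu ^ M * F (j+1) x = uu ^ (m+1) * q := by
        intro j hii2 hprev
        obtain ⟨q1, hq1, he1⟩ := hprev
        classical
        set s0 : Finset Ψ := Finset.univ.filter (fun y => ¬ ii j y) with hs0
        have hYy : ∀ y ∈ s0, ∃ j' < k, ¬ ii j' y := by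
          intro y hy
          rw [hs0, Finset.mem_filter] at hy
          exact ⟨j % k, Nat.mod_lt _ hk, fun hcon => hy.2 ((hiiwrap j y).mpr hcon)⟩
        have hchoice : ∀ y ∈ s0, ∃ q, Int0 q ∧ uu ^ M * F j y = uu ^ m * q :=
          fun y hy => ih y (hYy y hy) j
        choose Q hQint hQeq using hchoice
        refine ⟨(c j)⁻¹ * (-(c j * q1) + ∑ y ∈ s0.attach, mu x y.1 * Q y.1 y.2), ?_, ?_⟩
        · exact int0_mul (hcinv j) (int0_add (int0_neg (int0_mul (hcint j) hq1))
            (int0_sum _ _ (fun y _ => int0_mul (hmu x y.1) (hQint y.1 y.2))))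
        have hsum : uu ^ M * ∑ y ∈ s0, mu x y * F j y
            = uu ^ m * ∑ y ∈ s0.attach, mu x y.1 * Q y.1 y.2 := by
          rw [← Finset.sum_attach s0 (fun y => mu x y * F j y), Finset.mul_sum, Finset.mul_sum]
          apply Finset.sum_congr rfl
          intro y _
          calc uu ^ M * (mu x y.1 * F j y.1) = mu x y.1 * (uu ^ M * F j y.1) := by ring
            _ = mu x y.1 * (uu ^ m * Q y.1 y.2) := by rw [hQeq y.1 y.2]
            _ = uu ^ m * (mu x y.1 * Q y.1 y.2) := by ring
        have h2 : c j * (uu ^ M * F (j+1) x)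
            = uu ^ (m+1) * (-(c j * q1) + ∑ y ∈ s0.attach, mu x y.1 * Q y.1 y.2) := by
          calc c j * (uu ^ M * F (j+1) x) = uu ^ M * (c j * F (j+1) x) := by ring
            _ = uu ^ M * (-(c j) * F j x + uu * ∑ y ∈ s0, mu x y * F j y) := by
                rw [hstep2 j x hii2]
            _ = -(c j) * (uu ^ M * F j x) + uu * (uu ^ M * ∑ y ∈ s0, mu x y * F j y) := by ring
            _ = -(c j) * (uu ^ (m+1) * q1)
                + uu * (uu ^ m * ∑ y ∈ s0.attach, mu x y.1 * Q y.1 y.2) := by rw [he1, hsum]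
            _ = uu ^ (m+1) * (-(c j * q1) + ∑ y ∈ s0.attach, mu x y.1 * Q y.1 y.2) := by ring
        calc uu ^ M * F (j+1) x = (c j)⁻¹ * (c j * (uu ^ M * F (j+1) x)) := by
              rw [inv_mul_cancel_left₀ (hcne j)]
          _ = (c j)⁻¹ * (uu ^ (m+1) * (-(c j * q1) + ∑ y ∈ s0.attach, mu x y.1 * Q y.1 y.2)) := by
              rw [h2]
          _ = uu ^ (m+1) * ((c j)⁻¹ * (-(c j * q1) + ∑ y ∈ s0.attach, mu x y.1 * Q y.1 y.2)) := by
              ring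
      have inner : ∀ l : ℕ, ∃ q, Int0 q ∧ uu ^ M * F (j₀ + 1 + l) x = uu ^ (m+1) * q := by
        intro l
        induction l with
        | zero => exact key1 j₀ hj₀
        | succ l ihl =>
          by_cases hii2 : ii (j₀ + 1 + l) x
          · exact key2 (j₀ + 1 + l) hii2 ihl
          · exact key1 (j₀ + 1 + l) hii2
      intro j
      have hge : j₀ + 1 ≤ j + (j₀ + 1) * k := by
        have h1 : j₀ + 1 ≤ (j₀ + 1) * k := Nat.le_mul_of_pos_right _ hk
        omega
      obtain ⟨l, hl⟩ : ∃ l, j₀ + 1 + l = j + (j₀ + 1) * k := ⟨j + (j₀ + 1) * k - (j₀ + 1), by omega⟩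
      obtain ⟨q, hq, he⟩ := inner l
      refine ⟨q, hq, ?_⟩
      rw [hl] at he
      rwa [hFn (j₀ + 1) j x] at he
  intro j x hx
  have h0 : uu ^ M * F j x = 0 := eq_zero_of_forall_int0 _ (fun m => main m x hx j)
  have hXne : (uu : Kq) ≠ 0 := by rw [uu]; exact RatFunc.X_ne_zero
  rcases mul_eq_zero.mp h0 with h | h
  · exact absurd h (pow_ne_zero _ hXne)
  · exact h

lemma exists_chain {V : Type*} {r : V → V → Prop} {a b : V} (h : Relation.TransGen r a b) :
    ∃ k : ℕ, 0 < k ∧ ∃ w : ℕ → V, w 0 = a ∧ w k = b ∧ ∀ j, j < k → r (w j) (w (j+1)) := by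
  induction h with
  | @single b' hrel =>
    refine ⟨1, one_pos, fun j => if j = 0 then a else b', by simp, by simp, ?_⟩
    intro j hj
    interval_cases j
    simpa using hrel
  | @tail b' c' _ hbc ih =>
    obtain ⟨k, hk, w, h0, hkb, hstep⟩ := ih
    refine ⟨k + 1, Nat.succ_pos _, fun j => if j ≤ k then w j else c', ?_, ?_, ?_⟩
    · simp [Nat.zero_le]
      exact h0
    · simp
    · intro j hj
      by_cases hjk : j < k
      · have h1 : j ≤ k := le_of_lt hjk
        have h2 : j + 1 ≤ k := hjk
        simp only [if_pos h1, if_pos h2]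
        exact hstep j hjk
      · have hjeq : j = k := by omega
        subst hjeq
        have h1 : j ≤ j := le_refl j
        simp only [if_pos h1, if_neg (by omega : ¬ j + 1 ≤ j)]
        rw [hkb]
        exact hbc

end WdigraphAux

variable {B W : Type*} [Group W] {M : CoxeterMatrix B}
variable {H : Type*} [Ring H] [Algebra Kq H]

/-- `ρ` is the representation of `H` on `M(Γ)` (the `ℚ(u)`-vector space with
basis the vertices of `Γ`) in which each `T_s` acts by the operator `τ_s`
determined by the edges of `Γ`. -/
def WDigraphRep {V : Type*} (cs : CoxeterSystem M W) (ha : HeckeAlgebra cs H)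
    (Γ : SLabeledDigraph V B)
    (ρ : H →ₐ[Kq] Module.End Kq (V →₀ Kq)) : Prop :=
  ∀ (a b : V) (i : B),
    (Γ.Edge a b i false →
      ρ (ha.T (cs.simple i)) (single a (1 : Kq)) = single b (1 : Kq) ∧
      ρ (ha.T (cs.simple i)) (single b (1 : Kq))
        = (uu ^ 2 - 1) • single b (1 : Kq) + (uu ^ 2) • single a (1 : Kq)) ∧
    (Γ.Edge a b i true →
      ρ (ha.T (cs.simple i)) (single a (1 : Kq)) = uu • single a (1 : Kq) + (uu + 1) • single b (1 : Kq) ∧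
      ρ (ha.T (cs.simple i)) (single b (1 : Kq))
        = (uu ^ 2 - uu - 1) • single b (1 : Kq) + (uu ^ 2 - uu) • single a (1 : Kq))

/-- `Γ` is a `W`-digraph: the assignment `T_s ↦ τ_s` extends to a
representation of `H` on `M(Γ)`. -/
def IsWDigraph {V : Type*} (cs : CoxeterSystem M W) (ha : HeckeAlgebra cs H)
    (Γ : SLabeledDigraph V B) : Prop :=
  ∃ ρ : H →ₐ[Kq] Module.End Kq (V →₀ Kq), WDigraphRep cs ha Γ ρ


open scoped Classical in
/-- Suppose `W_J` is finite for every proper subset `J ⊊ S`,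
`Γ` is a connected `W`-digraph with finite vertex set, and the `H`-module
`M(Γ)` is isomorphic to the module afforded by a `W`-graph
`(Ψ, I, μ)` over `ℚ` (in the sense of Kazhdan–Lusztig).  Then `Γ` is acyclic. -/
theorem wdigraph_acyclic_of_wgraph {V : Type*} [Finite V]
    (cs : CoxeterSystem M W) (ha : HeckeAlgebra cs H)
    (hparab : ∀ J : Set B, J ≠ Set.univ → Finite (Subgroup.closure (cs.simple '' J)))
    (Γ : SLabeledDigraph V B) (hconn : Γ.Connected)
    (ρ : H →ₐ[Kq] Module.End Kq (V →₀ Kq)) (hρ : WDigraphRep cs ha Γ ρ)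
    (Ψ : Type*) [Fintype Ψ] (I : Ψ → Set B) (μ : Ψ → Ψ → ℚ)
    (ρΨ : H →ₐ[Kq] Module.End Kq (Ψ →₀ Kq))
    (hΨ : ∀ (i : B) (x : Ψ),
      ρΨ (ha.T (cs.simple i)) (single x (1 : Kq)) =
        if i ∈ I x then - single x (1 : Kq)
        else uu ^ 2 • single x (1 : Kq) +
          uu • ∑ y ∈ Finset.univ.filter (fun y => i ∈ I y),
            (algebraMap ℚ Kq (μ y x)) • single y (1 : Kq))
    (e : (V →₀ Kq) ≃ₗ[Kq] (Ψ →₀ Kq))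
    (he : ∀ (h : H) (v : V →₀ Kq), e (ρ h v) = ρΨ h (e v)) :
    Γ.Acyclic := by
  classical
  intro a hcyc
  obtain ⟨k, hk, w, hw0, hwk, hstepchain⟩ := WdigraphAux.exists_chain hcyc
  have hsel : ∀ i : Fin k, ∃ s d, Γ.Edge (w i) (w (i + 1)) s d := fun i => hstepchain i i.2
  choose s0 d0 hedge0 using hsel
  set vf : ℕ → V := fun j => w (j % k) with hvf
  set st : ℕ → B := fun j => s0 ⟨j % k, Nat.mod_lt _ hk⟩ with hst
  set dt : ℕ → Bool := fun j => d0 ⟨j % k, Nat.mod_lt _ hk⟩ with hdt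
  have hedge : ∀ j : ℕ, Γ.Edge (vf j) (vf (j + 1)) (st j) (dt j) := by
    intro j
    have hlt : j % k < k := Nat.mod_lt _ hk
    have hmodsucc : (j + 1) % k = (j % k + 1) % k := by
      have h1 : j + 1 = (j % k + 1) + (j / k) * k := by
        have := Nat.mod_add_div' j k; omega
      rw [h1, Nat.add_mul_mod_self_right]
    have hbase := hedge0 ⟨j % k, hlt⟩
    by_cases hcase : j % k + 1 < k
    · have h2 : (j + 1) % k = j % k + 1 := by rw [hmodsucc, Nat.mod_eq_of_lt hcase]
      show Γ.Edge (w (j % k)) (w ((j + 1) % k)) _ _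
      rw [h2]
      exact hbase
    · have h3 : j % k + 1 = k := by omega
      have h2 : (j + 1) % k = 0 := by rw [hmodsucc, h3, Nat.mod_self]
      show Γ.Edge (w (j % k)) (w ((j + 1) % k)) _ _
      rw [h2]
      have h4 : w (j % k + 1) = w 0 := by rw [h3, hwk, hw0]
      rw [← h4]
      exact hbase
  -- coordinates of the Ψ-side operator on an arbitrary vector
  have hcoord : ∀ (b : B) (g : Ψ →₀ Kq) (x : Ψ),
      (ρΨ (ha.T (cs.simple b)) g) x
        = ∑ y : Ψ, g y * (ρΨ (ha.T (cs.simple b)) (single y (1 : Kq))) x := by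
    intro b g x
    have hg : (∑ y : Ψ, Finsupp.single y (g y)) = g := by
      rw [← Finsupp.sum_fintype _ _ (fun y => Finsupp.single_zero y)]
      exact Finsupp.sum_single g
    conv_lhs => rw [← hg]
    rw [map_sum, Finsupp.finset_sum_apply]
    apply Finset.sum_congr rfl
    intro y _
    have h5 : Finsupp.single y (g y) = g y • Finsupp.single y (1 : Kq) := by
      rw [Finsupp.smul_single' (g y) y 1, mul_one]
    rw [h5, map_smul, Finsupp.smul_apply, smul_eq_mul]
  have hR1 : ∀ (b : B) (g : Ψ →₀ Kq) (x : Ψ), b ∉ I x →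
      (ρΨ (ha.T (cs.simple b)) g) x = uu ^ 2 * g x := by
    intro b g x hbx
    rw [hcoord]
    have hterm : ∀ y : Ψ, g y * (ρΨ (ha.T (cs.simple b)) (single y (1 : Kq))) x
        = if y = x then uu ^ 2 * g x else 0 := by
      intro y
      by_cases hby : b ∈ I y
      · have hyx : y ≠ x := fun h => hbx (h ▸ hby)
        rw [hΨ b y, if_pos hby, Finsupp.neg_apply, Finsupp.single_apply, if_neg hyx, if_neg hyx]
        ring
      · rw [hΨ b y, if_neg hby, Finsupp.add_apply, Finsupp.smul_apply, Finsupp.smul_apply,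
          Finsupp.single_apply]
        have hzero : (∑ z ∈ Finset.univ.filter (fun z => b ∈ I z),
            (algebraMap ℚ Kq (μ z y)) • Finsupp.single z (1 : Kq)) x = 0 := by
          rw [Finsupp.finset_sum_apply]
          apply Finset.sum_eq_zero
          intro z hz
          rw [Finset.mem_filter] at hz
          have hzx : z ≠ x := fun h => hbx (h ▸ hz.2)
          rw [Finsupp.smul_apply, Finsupp.single_apply, if_neg hzx, smul_zero]
        rw [hzero]
        by_cases hyx : y = x
        · subst hyx; simp [mul_comm]
        · rw [if_neg hyx, if_neg hyx]; simp
    rw [Finset.sum_congr rfl (fun y _ => hterm y), Finset.sum_ite_eq' Finset.univ x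
      (fun _ => uu ^ 2 * g x), if_pos (Finset.mem_univ x)]
  have hR2 : ∀ (b : B) (g : Ψ →₀ Kq) (x : Ψ), b ∈ I x →
      (ρΨ (ha.T (cs.simple b)) g) x = -(g x)
        + uu * ∑ y ∈ Finset.univ.filter (fun y => ¬ b ∈ I y),
            (algebraMap ℚ Kq (μ x y)) * g y := by
    intro b g x hbx
    rw [hcoord]
    have hterm : ∀ y : Ψ, g y * (ρΨ (ha.T (cs.simple b)) (single y (1 : Kq))) x
        = if b ∈ I y then (if y = x then -(g x) else 0)
          else uu * ((algebraMap ℚ Kq (μ x y)) * g y) := by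
      intro y
      by_cases hby : b ∈ I y
      · rw [hΨ b y, if_pos hby, if_pos hby, Finsupp.neg_apply, Finsupp.single_apply]
        by_cases hyx : y = x
        · subst hyx; rw [if_pos rfl, if_pos rfl]; ring
        · rw [if_neg hyx, if_neg hyx]; ring
      · rw [hΨ b y, if_neg hby, if_neg hby, Finsupp.add_apply, Finsupp.smul_apply,
          Finsupp.smul_apply]
        have hyx : y ≠ x := fun h => hby (h ▸ hbx)
        rw [Finsupp.single_apply, if_neg hyx]
        have hsum : (∑ z ∈ Finset.univ.filter (fun z => b ∈ I z),
            (algebraMap ℚ Kq (μ z y)) • Finsupp.single z (1 : Kq)) x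
              = algebraMap ℚ Kq (μ x y) := by
          rw [Finsupp.finset_sum_apply]
          rw [Finset.sum_eq_single_of_mem x (Finset.mem_filter.mpr ⟨Finset.mem_univ x, hbx⟩)]
          · rw [Finsupp.smul_apply, Finsupp.single_eq_same, smul_eq_mul, mul_one]
          · intro z _ hzx
            rw [Finsupp.smul_apply, Finsupp.single_apply, if_neg hzx, smul_zero]
        rw [hsum]
        simp only [smul_eq_mul, mul_zero, zero_add]
        ring
    rw [Finset.sum_congr rfl (fun y _ => hterm y), Finset.sum_ite]
    have hfirst : (∑ y ∈ Finset.univ.filter (fun y => b ∈ I y),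
        (if y = x then -(g x) else 0)) = -(g x) := by
      rw [Finset.sum_ite_eq' (Finset.univ.filter (fun y => b ∈ I y)) x (fun _ => -(g x)),
        if_pos (Finset.mem_filter.mpr ⟨Finset.mem_univ x, hbx⟩)]
    rw [hfirst, Finset.mul_sum]
  -- the step relations along the cycle
  have hstepco : ∀ (j : ℕ) (x : Ψ),
      (cond (dt j) (uu + 1) 1) * (e (Finsupp.single (vf (j + 1)) (1 : Kq))) x
        = (ρΨ (ha.T (cs.simple (st j))) (e (Finsupp.single (vf j) (1 : Kq)))) x
          - (cond (dt j) uu 0) * (e (Finsupp.single (vf j) (1 : Kq))) x := by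
    intro j x
    have hedgej := hedge j
    rcases hdj : dt j with _ | _ <;> rw [hdj] at hedgej
    · have hact := (hρ (vf j) (vf (j + 1)) (st j)).1 hedgej
      have h6 : ρΨ (ha.T (cs.simple (st j))) (e (Finsupp.single (vf j) (1 : Kq)))
          = e (Finsupp.single (vf (j + 1)) (1 : Kq)) := by
        rw [← he, hact.1]
      rw [h6]
      simp only [Bool.cond_false]
      ring
    · have hact := (hρ (vf j) (vf (j + 1)) (st j)).2 hedgej
      have h6 : ρΨ (ha.T (cs.simple (st j))) (e (Finsupp.single (vf j) (1 : Kq)))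
          = uu • e (Finsupp.single (vf j) (1 : Kq))
            + (uu + 1) • e (Finsupp.single (vf (j + 1)) (1 : Kq)) := by
        rw [← he, hact.1, map_add, map_smul, map_smul]
      rw [h6]
      simp only [Bool.cond_true, Finsupp.add_apply, Finsupp.smul_apply, smul_eq_mul]
      ring
  -- apply the core lemma
  have hzero : ∀ (j : ℕ) (x : Ψ), (∃ j' < k, ¬ st j' ∈ I x) →
      (e (Finsupp.single (vf j) (1 : Kq))) x = 0 := by
    apply WdigraphAux.core k hk
      (fun j x => (e (Finsupp.single (vf j) (1 : Kq))) x)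
      (fun j x => st j ∈ I x)
      (fun x y => algebraMap ℚ Kq (μ x y))
      (fun j => cond (dt j) (uu + 1) 1)
      (fun j => cond (dt j) uu 0)
    · -- hFper
      intro j x
      have h7 : vf (j + k) = vf j := by
        simp only [hvf]
        rw [Nat.add_mod_right]
      rw [h7]
    · -- hiiper
      intro j x
      have h7 : st (j + k) = st j := by
        simp only [hst]
        congr 1
        exact Fin.ext (Nat.add_mod_right j k)
      rw [h7]
    · -- hmu
      intro x y
      exact WdigraphAux.int0_rat (μ x y)
    · -- hcne
      intro j
      rcases dt j with _ | _
      · simp only [Bool.cond_false]; exact one_ne_zero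
      · simp only [Bool.cond_true]; exact WdigraphAux.uu_add_one_ne_zero
    · -- hcinv
      intro j
      rcases dt j with _ | _
      · simp only [Bool.cond_false, inv_one]; exact WdigraphAux.int0_one
      · simp only [Bool.cond_true]; exact WdigraphAux.int0_inv_uu_add_one
    · -- hcint
      intro j
      rcases dt j with _ | _
      · simp only [Bool.cond_false]; exact WdigraphAux.int0_one
      · simp only [Bool.cond_true]
        exact WdigraphAux.int0_add WdigraphAux.int0_uu WdigraphAux.int0_one
    · -- hts
      intro j
      rcases dt j with _ | _
      · simp only [Bool.cond_false]; exact ⟨uu, WdigraphAux.int0_uu, by ring⟩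
      · simp only [Bool.cond_true]; exact ⟨uu - 1, WdigraphAux.int0_uu_sub_one, by ring⟩
    · -- hstep1
      intro j x hnii
      have h8 := hstepco j x
      rw [hR1 (st j) (e (Finsupp.single (vf j) (1 : Kq))) x hnii] at h8
      rw [h8]
      ring
    · -- hstep2
      intro j x hii2
      have h8 := hstepco j x
      rw [hR2 (st j) (e (Finsupp.single (vf j) (1 : Kq))) x hii2] at h8
      rcases hdj : dt j with _ | _ <;> rw [hdj] at h8 <;>
        simp only [Bool.cond_false, Bool.cond_true] at h8 ⊢ <;> rw [h8] <;> ring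
  -- final contradiction
  have hY0 : ∀ y : Ψ, ¬ st 0 ∈ I y → (e (Finsupp.single (vf 0) (1 : Kq))) y = 0 :=
    fun y hy => hzero 0 y ⟨0, hk, hy⟩
  have hfinal : ∀ x : Ψ, (e (Finsupp.single (vf 1) (1 : Kq))) x
      = -((e (Finsupp.single (vf 0) (1 : Kq))) x) := by
    intro x
    have h8 := hstepco 0 x
    rw [show (0 : ℕ) + 1 = 1 from rfl] at h8
    by_cases hx : st 0 ∈ I x
    · rw [hR2 (st 0) (e (Finsupp.single (vf 0) (1 : Kq))) x hx] at h8
      have hsz : (∑ y ∈ Finset.univ.filter (fun y => ¬ st 0 ∈ I y),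
          (algebraMap ℚ Kq (μ x y)) * (e (Finsupp.single (vf 0) (1 : Kq))) y) = 0 := by
        apply Finset.sum_eq_zero
        intro y hy
        rw [Finset.mem_filter] at hy
        rw [hY0 y hy.2, mul_zero]
      rw [hsz, mul_zero, add_zero] at h8
      rcases hc : dt 0 with _ | _ <;> rw [hc] at h8 <;>
        simp only [Bool.cond_false, Bool.cond_true] at h8
      · rw [one_mul] at h8
        rw [h8]; ring
      · have h9 : (uu + 1) * (e (Finsupp.single (vf 1) (1 : Kq))) x
            = (uu + 1) * (-((e (Finsupp.single (vf 0) (1 : Kq))) x)) := by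
          rw [h8]; ring
        exact mul_left_cancel₀ WdigraphAux.uu_add_one_ne_zero h9
    · have hx0 : (e (Finsupp.single (vf 0) (1 : Kq))) x = 0 := hzero 0 x ⟨0, hk, hx⟩
      rw [hR1 (st 0) (e (Finsupp.single (vf 0) (1 : Kq))) x hx, hx0, mul_zero, mul_zero,
        sub_zero] at h8
      rw [hx0, neg_zero]
      rcases hc : dt 0 with _ | _ <;> rw [hc] at h8 <;>
        simp only [Bool.cond_false, Bool.cond_true] at h8
      · rw [one_mul] at h8
        exact h8
      · rcases mul_eq_zero.mp h8 with h | h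
        · exact absurd h WdigraphAux.uu_add_one_ne_zero
        · exact h
  have hfinsupp : e (Finsupp.single (vf 1) (1 : Kq)) = e (- Finsupp.single (vf 0) (1 : Kq)) := by
    rw [map_neg]
    ext x
    rw [Finsupp.neg_apply]
    exact hfinal x
  have hinj := e.injective hfinsupp
  have heval := congrArg (fun f => f (vf 1)) hinj
  simp only [Finsupp.neg_apply, Finsupp.single_eq_same, Finsupp.single_apply] at heval
  by_cases hv : vf 0 = vf 1
  · rw [if_pos hv] at heval
    have h10 : (algebraMap ℚ Kq) 1 = (algebraMap ℚ Kq) (-1) := by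
      rw [map_one, map_neg, map_one]
      exact heval
    have h11 := (algebraMap ℚ Kq).injective h10
    norm_num at h11
  · rw [if_neg hv] at heval
    simp at heval
end
end

section
/- Let (W,S) be a Coxeter system, H its Hecke algebra over ℚ(u), M an H-module, and X ⊆ M a subset that supports a W-digraph. Then: (i) for every s ∈ S and α ∈ X, the five elements α, T_sα, T_s^{-1}α, T_s°α, (T_s°)^{-1}α are pairwise distinct, and X contains exactly one element of the set {T_sα, T_s^{-1}α, T_s°α, (T_s°)^{-1}α}; (ii) the ℚ(u)-linear span of X is an H-submodule of M. -/
open Finsupp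

set_option synthInstance.maxHeartbeats 1000000
set_option maxHeartbeats 1000000

noncomputable section

variable {B W : Type*} [Group W] {M : CoxeterMatrix B}
variable {H : Type*} [Ring H] [Algebra Kq H]

/-- The element `T_s° = (u+1)⁻¹ (T_s - u)` of `H`, for `s = simple i`. -/
def Tcirc (cs : CoxeterSystem M W) (ha : HeckeAlgebra cs H) (i : B) : H :=
  (uu + 1)⁻¹ • (ha.T (cs.simple i) - uu • (1 : H))

/-- A subset `X` of the `H`-module given by `ρ` *supports a `W`-digraph* if it
is linearly independent and, for each `α ∈ X` and `s ∈ S`, at least one of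
`T_s α`, `T_s⁻¹ α`, `T_s° α`, `(T_s°)⁻¹ α` lies in `X`. -/
def SupportsWDigraph {Mo : Type*} [AddCommGroup Mo] [Module Kq Mo]
    (cs : CoxeterSystem M W) (ha : HeckeAlgebra cs H)
    (ρ : H →ₐ[Kq] Module.End Kq Mo) (X : Set Mo) : Prop :=
  LinearIndependent Kq (fun x : X => (x : Mo)) ∧
  ∀ α ∈ X, ∀ i : B,
    (ρ (ha.T (cs.simple i)) α ∈ X ∨
     ρ (Ring.inverse (ha.T (cs.simple i))) α ∈ X ∨
     ρ (Tcirc cs ha i) α ∈ X ∨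
     ρ (Ring.inverse (Tcirc cs ha i)) α ∈ X)


namespace WDigraphAux

lemma poly_ne {p : Polynomial ℚ} (h : Polynomial.eval 3 p ≠ 0) :
    algebraMap (Polynomial ℚ) Kq p ≠ 0 :=
  RatFunc.algebraMap_ne_zero (fun hp => h (by rw [hp]; simp))

lemma uu_eq : uu = algebraMap (Polynomial ℚ) Kq Polynomial.X :=
  (RatFunc.algebraMap_X).symm

instance : CharZero Kq :=
  charZero_of_injective_algebraMap (algebraMap ℚ Kq).injective

lemma hu0 : uu ≠ 0 := RatFunc.X_ne_zero

lemma hu1 : uu + 1 ≠ 0 := by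
  have e : uu + 1 = algebraMap (Polynomial ℚ) Kq (Polynomial.X + 1) := by simp [uu_eq]
  rw [e]; exact poly_ne (by norm_num)

lemma hu2 : uu ^ 2 ≠ 0 := pow_ne_zero 2 hu0

lemma h21 : uu ^ 2 - 1 ≠ 0 := by
  have e : uu ^ 2 - 1 = algebraMap (Polynomial ℚ) Kq (Polynomial.X ^ 2 - 1) := by simp [uu_eq]
  rw [e]; exact poly_ne (by norm_num)

lemma huu : uu ^ 2 - uu ≠ 0 := by
  have e : uu ^ 2 - uu = algebraMap (Polynomial ℚ) Kq (Polynomial.X ^ 2 - Polynomial.X) := by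
    simp [uu_eq]
  rw [e]; exact poly_ne (by norm_num)

lemma h211 : uu ^ 2 - uu - 1 ≠ 0 := by
  have e : uu ^ 2 - uu - 1
      = algebraMap (Polynomial ℚ) Kq (Polynomial.X ^ 2 - Polynomial.X - 1) := by simp [uu_eq]
  rw [e]; exact poly_ne (by norm_num)

lemma h221 : uu ^ 2 - 2 * uu - 1 ≠ 0 := by
  have e : uu ^ 2 - 2 * uu - 1
      = algebraMap (Polynomial ℚ) Kq (Polynomial.X ^ 2 - 2 * Polynomial.X - 1) := by
    simp [uu_eq, map_ofNat]
  rw [e]; exact poly_ne (by norm_num)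

/-- Linear independence kills a 3-term dependence with a nonzero coefficient. -/
lemma dep3 {Mo : Type*} [AddCommGroup Mo] [Module Kq Mo] {X : Set Mo}
    (hli : LinearIndependent Kq (fun x : X => (x : Mo)))
    {x y z : Mo} (hx : x ∈ X) (hy : y ∈ X) (hz : z ∈ X)
    (hxz : x ≠ z) (hyz : y ≠ z) {c₁ c₂ c₃ : Kq} (hc₃ : c₃ ≠ 0)
    (h : c₁ • x + c₂ • y + c₃ • z = 0) : False := by
  classical
  set l : X →₀ Kq :=
    Finsupp.single ⟨x, hx⟩ c₁ + Finsupp.single ⟨y, hy⟩ c₂ + Finsupp.single ⟨z, hz⟩ c₃ with hl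
  have hcomb : Finsupp.linearCombination Kq (fun x : X => (x : Mo)) l = 0 := by
    rw [hl]
    simp only [map_add, Finsupp.linearCombination_single]
    exact h
  have hl0 : l = 0 := linearIndependent_iff.mp hli l hcomb
  have hz0 : l ⟨z, hz⟩ = c₃ := by
    simp [hl, Finsupp.single_apply, Subtype.ext_iff, hxz, hyz]
  rw [hl0] at hz0
  exact hc₃ (by simpa using hz0.symm)

lemma combo0 {V : Type*} [AddCommGroup V] [Module Kq V] (α β : V) (p q r s t : Kq)
    (h1 : p + r = 0) (h2 : q + s + t = 0) :
    (p • β + q • α) + (r • β + s • α) + t • α = 0 := by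
  have e : (p • β + q • α) + (r • β + s • α) + t • α = (p + r) • β + (q + s + t) • α := by
    rw [add_smul, add_smul, add_smul]; abel
  rw [e, h1, h2, zero_smul, zero_smul, add_zero]

lemma inv_ne_inv {p q : Kq} (h : p - q ≠ 0) : p⁻¹ ≠ q⁻¹ :=
  fun e => h (sub_eq_zero.mpr (inv_injective e))

section Hecke

variable {B W : Type*} [Group W] {M : CoxeterMatrix B}
variable {H : Type*} [Ring H] [Algebra Kq H]
variable (cs : CoxeterSystem M W) (ha : HeckeAlgebra cs H)

lemma quad (i : B) : ha.T (cs.simple i) * ha.T (cs.simple i)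
    = (uu ^ 2) • (1 : H) + (uu ^ 2 - 1) • ha.T (cs.simple i) := by
  have h := ha.T_mul_of_gt i (cs.simple i) (by
    rw [cs.simple_mul_simple_self, cs.length_one, cs.length_simple]; norm_num)
  rwa [cs.simple_mul_simple_self, ha.T_one] at h

lemma mul_lin (i : B) (a b : Kq) :
    (ha.T (cs.simple i) - a • 1) * (ha.T (cs.simple i) - b • 1)
      = (uu ^ 2 + a * b) • (1 : H) + (uu ^ 2 - 1 - a - b) • ha.T (cs.simple i) := by
  have e1 : (ha.T (cs.simple i) - a • 1) * (ha.T (cs.simple i) - b • 1)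
      = ha.T (cs.simple i) * ha.T (cs.simple i)
        - b • ha.T (cs.simple i) - a • ha.T (cs.simple i) + (a * b) • (1 : H) := by
    simp only [sub_mul, mul_sub, smul_sub, smul_mul_assoc, mul_smul_comm, one_mul, mul_one,
      smul_smul, mul_comm a b]
    abel
  rw [e1, quad cs ha i]
  have e2 : ∀ (x y : H) (c d e f g : Kq),
      c • x + d • y - e • y - f • y + g • x = (c + g) • x + (d - e - f) • y := by
    intro x y c d e f g
    rw [sub_smul, sub_smul, add_smul]; abel
  rw [e2]
  have c1 : uu ^ 2 - 1 - b - a = uu ^ 2 - 1 - a - b := by ring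
  rw [c1]

/-- `T_s` as a unit of `H`. -/
def TsUnit (i : B) : Hˣ where
  val := ha.T (cs.simple i)
  inv := (uu ^ 2)⁻¹ • (ha.T (cs.simple i) - (uu ^ 2 - 1) • 1)
  val_inv := by
    rw [mul_smul_comm, mul_sub, mul_smul_comm, mul_one, quad cs ha i,
      add_sub_cancel_right, smul_smul, inv_mul_cancel₀ hu2, one_smul]
  inv_val := by
    rw [smul_mul_assoc, sub_mul, smul_mul_assoc, one_mul, quad cs ha i,
      add_sub_cancel_right, smul_smul, inv_mul_cancel₀ hu2, one_smul]

lemma ringInverse_T (i : B) :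
    Ring.inverse (ha.T (cs.simple i))
      = (uu ^ 2)⁻¹ • (ha.T (cs.simple i) - (uu ^ 2 - 1) • 1) :=
  Ring.inverse_unit (TsUnit cs ha i)

/-- `T_s°` as a unit of `H`. -/
def TcUnit (i : B) : Hˣ where
  val := Tcirc cs ha i
  inv := (uu ^ 2 - uu)⁻¹ • (ha.T (cs.simple i) - (uu ^ 2 - uu - 1) • 1)
  val_inv := by
    show ((uu + 1)⁻¹ • (ha.T (cs.simple i) - uu • (1 : H))) * _ = 1
    rw [smul_mul_assoc, mul_smul_comm, mul_lin cs ha i uu (uu ^ 2 - uu - 1)]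
    have c2 : uu ^ 2 - 1 - uu - (uu ^ 2 - uu - 1) = 0 := by ring
    rw [c2, zero_smul, add_zero, smul_smul, smul_smul]
    have c3 : (uu + 1)⁻¹ * (uu ^ 2 - uu)⁻¹ * (uu ^ 2 + uu * (uu ^ 2 - uu - 1)) = 1 := by
      have hu0' := hu0
      have h1 : uu - 1 ≠ 0 := fun h => huu (by linear_combination uu * h)
      field_simp [hu1, huu]
      ring
    rw [c3, one_smul]
  inv_val := by
    show _ * ((uu + 1)⁻¹ • (ha.T (cs.simple i) - uu • (1 : H))) = 1
    rw [smul_mul_assoc, mul_smul_comm, mul_lin cs ha i (uu ^ 2 - uu - 1) uu]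
    have c2 : uu ^ 2 - 1 - (uu ^ 2 - uu - 1) - uu = 0 := by ring
    rw [c2, zero_smul, add_zero, smul_smul, smul_smul]
    have c3 : (uu ^ 2 - uu)⁻¹ * (uu + 1)⁻¹ * (uu ^ 2 + (uu ^ 2 - uu - 1) * uu) = 1 := by
      have hu0' := hu0
      have h1 : uu - 1 ≠ 0 := fun h => huu (by linear_combination uu * h)
      field_simp [hu1, huu]
      ring
    rw [c3, one_smul]

lemma ringInverse_Tc (i : B) :
    Ring.inverse (Tcirc cs ha i)
      = (uu ^ 2 - uu)⁻¹ • (ha.T (cs.simple i) - (uu ^ 2 - uu - 1) • 1) :=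
  Ring.inverse_unit (TcUnit cs ha i)

end Hecke

end WDigraphAux

/-- Lemma `submodule`.  If `X ⊆ M` supports a `W`-digraph,
then (i) for `s ∈ S` and `α ∈ X` the five elements `α, T_s α, T_s⁻¹ α, T_s° α,
(T_s°)⁻¹ α` are pairwise distinct and exactly one of the last four lies in
`X`; and (ii) the span of `X` is an `H`-submodule of `M`. -/
theorem supports_wdigraph_distinct_unique_span {Mo : Type*}
    [AddCommGroup Mo] [Module Kq Mo]
    (cs : CoxeterSystem M W) (ha : HeckeAlgebra cs H)
    (ρ : H →ₐ[Kq] Module.End Kq Mo) (X : Set Mo)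
    (hX : SupportsWDigraph cs ha ρ X) :
    (∀ α ∈ X, ∀ i : B,
      ([α, ρ (ha.T (cs.simple i)) α, ρ (Ring.inverse (ha.T (cs.simple i))) α,
          ρ (Tcirc cs ha i) α, ρ (Ring.inverse (Tcirc cs ha i)) α] :
        List Mo).Pairwise (· ≠ ·) ∧
      ∃! y : Mo, y ∈ X ∧
        y ∈ ({ρ (ha.T (cs.simple i)) α, ρ (Ring.inverse (ha.T (cs.simple i))) α,
              ρ (Tcirc cs ha i) α, ρ (Ring.inverse (Tcirc cs ha i)) α} : Set Mo)) ∧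
    (∀ h : H, ∀ v ∈ Submodule.span Kq X, ρ h v ∈ Submodule.span Kq X) := by
  classical
  obtain ⟨hli, hmemX⟩ := hX
  open WDigraphAux in
  -- module-level formulas
  have fT2 : ∀ (i : B) (m : Mo), ρ (ha.T (cs.simple i)) (ρ (ha.T (cs.simple i)) m)
      = (uu ^ 2) • m + (uu ^ 2 - 1) • ρ (ha.T (cs.simple i)) m := by
    intro i m
    have h1 : ρ (ha.T (cs.simple i) * ha.T (cs.simple i)) m
        = ρ ((uu ^ 2) • (1 : H) + (uu ^ 2 - 1) • ha.T (cs.simple i)) m := by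
      rw [WDigraphAux.quad cs ha i]
    rw [map_mul, Module.End.mul_apply, map_add, map_smul, map_smul, map_one,
      LinearMap.add_apply, LinearMap.smul_apply, LinearMap.smul_apply,
      Module.End.one_apply] at h1
    exact h1
  have fI : ∀ (i : B) (m : Mo), ρ (Ring.inverse (ha.T (cs.simple i))) m
      = (uu ^ 2)⁻¹ • ρ (ha.T (cs.simple i)) m + (-((uu ^ 2)⁻¹ * (uu ^ 2 - 1))) • m := by
    intro i m
    rw [WDigraphAux.ringInverse_T cs ha i, map_smul, map_sub, map_smul, map_one,
      LinearMap.smul_apply, LinearMap.sub_apply, LinearMap.smul_apply, Module.End.one_apply,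
      smul_sub, smul_smul, sub_eq_add_neg, ← neg_smul]
  have fC : ∀ (i : B) (m : Mo), ρ (Tcirc cs ha i) m
      = (uu + 1)⁻¹ • ρ (ha.T (cs.simple i)) m + (-((uu + 1)⁻¹ * uu)) • m := by
    intro i m
    rw [show Tcirc cs ha i = (uu + 1)⁻¹ • (ha.T (cs.simple i) - uu • (1 : H)) from rfl,
      map_smul, map_sub, map_smul, map_one,
      LinearMap.smul_apply, LinearMap.sub_apply, LinearMap.smul_apply, Module.End.one_apply,
      smul_sub, smul_smul, sub_eq_add_neg, ← neg_smul]
  have fCI : ∀ (i : B) (m : Mo), ρ (Ring.inverse (Tcirc cs ha i)) m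
      = (uu ^ 2 - uu)⁻¹ • ρ (ha.T (cs.simple i)) m
        + (-((uu ^ 2 - uu)⁻¹ * (uu ^ 2 - uu - 1))) • m := by
    intro i m
    rw [WDigraphAux.ringInverse_Tc cs ha i, map_smul, map_sub, map_smul, map_one,
      LinearMap.smul_apply, LinearMap.sub_apply, LinearMap.smul_apply, Module.End.one_apply,
      smul_sub, smul_smul, sub_eq_add_neg, ← neg_smul]
  constructor
  · -- part (i)
    intro α hα i
    have hα0 : α ≠ 0 := hli.ne_zero ⟨α, hα⟩
    set β := ρ (ha.T (cs.simple i)) α with hβ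
    -- an element of X proportional to α must be α itself
    have honly : ∀ μ : Kq, μ • α ∈ X → μ = 1 := by
      intro μ hμ
      by_cases hμ0 : μ = 0
      · exfalso
        have := hli.ne_zero ⟨μ • α, hμ⟩
        exact this (by simp [hμ0])
      by_cases hcase : μ • α = α
      · have h0 : (μ - 1) • α = 0 := by rw [sub_smul, one_smul, hcase, sub_self]
        rcases smul_eq_zero.mp h0 with h | h
        · exact sub_eq_zero.mp h
        · exact absurd h hα0
      · exfalso
        refine WDigraphAux.dep3 hli hμ hμ hα hcase hcase (neg_ne_zero.mpr hμ0)
          (c₁ := 1) (c₂ := 0) ?_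
        rw [one_smul, zero_smul, add_zero, neg_smul]
        exact add_neg_cancel _
    -- β is not proportional to α
    have noeig : ∀ c : Kq, β ≠ c • α := by
      intro c hc
      have h1 := fT2 i α
      rw [← hβ, hc, map_smul, ← hβ, hc, smul_smul, smul_smul] at h1
      have hz : (c * c - uu ^ 2 - (uu ^ 2 - 1) * c) • α = 0 := by
        rw [sub_smul, sub_smul, h1]; abel
      have hcoef : c * c - uu ^ 2 - (uu ^ 2 - 1) * c = 0 := by
        rcases smul_eq_zero.mp hz with h | h
        · exact h
        · exact absurd h hα0
      have hfac : (c - uu ^ 2) * (c + 1) = 0 := by linear_combination hcoef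
      have conv1 : ρ (ha.T (cs.simple i)) α = c • α := by rw [← hβ, hc]
      have conv2 : ρ (Ring.inverse (ha.T (cs.simple i))) α
          = ((uu ^ 2)⁻¹ * c + -((uu ^ 2)⁻¹ * (uu ^ 2 - 1))) • α := by
        rw [fI i α, ← hβ, hc, smul_smul, ← add_smul]
      have conv3 : ρ (Tcirc cs ha i) α
          = ((uu + 1)⁻¹ * c + -((uu + 1)⁻¹ * uu)) • α := by
        rw [fC i α, ← hβ, hc, smul_smul, ← add_smul]
      have conv4 : ρ (Ring.inverse (Tcirc cs ha i)) α
          = ((uu ^ 2 - uu)⁻¹ * c + -((uu ^ 2 - uu)⁻¹ * (uu ^ 2 - uu - 1))) • α := by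
        rw [fCI i α, ← hβ, hc, smul_smul, ← add_smul]
      rcases mul_eq_zero.mp hfac with h | h
      · -- c = u²
        have hc2 : c = uu ^ 2 := sub_eq_zero.mp h
        subst hc2
        rcases hmemX α hα i with hm | hm | hm | hm
        · rw [conv1] at hm
          have := honly _ hm
          exact WDigraphAux.h21 (by rw [this, sub_self])
        · rw [conv2] at hm
          have h1 := honly _ hm
          have h2 : (uu ^ 2)⁻¹ * 1 = 1 := by linear_combination h1
          have h3 := (inv_mul_eq_one₀ WDigraphAux.hu2).mp h2
          exact WDigraphAux.h21 (by linear_combination h3)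
        · rw [conv3] at hm
          have h1 := honly _ hm
          have h2 : (uu + 1)⁻¹ * (uu ^ 2 - uu) = 1 := by linear_combination h1
          have h3 := (inv_mul_eq_one₀ WDigraphAux.hu1).mp h2
          exact WDigraphAux.h221 (by linear_combination -h3)
        · rw [conv4] at hm
          have h1 := honly _ hm
          have h2 : (uu ^ 2 - uu)⁻¹ * (uu + 1) = 1 := by linear_combination h1
          have h3 := (inv_mul_eq_one₀ WDigraphAux.huu).mp h2
          exact WDigraphAux.h221 (by linear_combination h3)
      · -- c = -1
        have hc2 : c = -1 := by linear_combination h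
        subst hc2
        have hne : (-1 : Kq) ≠ 1 := by norm_num
        rcases hmemX α hα i with hm | hm | hm | hm
        · rw [conv1] at hm
          exact hne (honly _ hm)
        · rw [conv2] at hm
          have h1 := honly _ hm
          have h2 : (uu ^ 2)⁻¹ * (-(uu ^ 2)) = 1 := by linear_combination h1
          have h3 := (inv_mul_eq_one₀ WDigraphAux.hu2).mp h2
          exact WDigraphAux.hu2 (by linear_combination (1/2 : Kq) * h3)
        · rw [conv3] at hm
          have h1 := honly _ hm
          have h2 : (uu + 1)⁻¹ * (-(uu + 1)) = 1 := by linear_combination h1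
          have h3 := (inv_mul_eq_one₀ WDigraphAux.hu1).mp h2
          exact WDigraphAux.hu1 (by linear_combination (1/2 : Kq) * h3)
        · rw [conv4] at hm
          have h1 := honly _ hm
          have h2 : (uu ^ 2 - uu)⁻¹ * (-(uu ^ 2 - uu)) = 1 := by linear_combination h1
          have h3 := (inv_mul_eq_one₀ WDigraphAux.huu).mp h2
          exact WDigraphAux.huu (by linear_combination (1/2 : Kq) * h3)
    -- two affine combinations with different β-coefficients are distinct
    have NE : ∀ a b a' b' : Kq, a ≠ a' → (a • β + b • α) ≠ (a' • β + b' • α) := by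
      intro a b a' b' hne heq
      apply noeig ((a - a')⁻¹ * (b' - b))
      have h0 : (a - a') • β - (b' - b) • α
          = (a • β + b • α) - (a' • β + b' • α) := by
        rw [sub_smul, sub_smul]; abel
      rw [heq, sub_self] at h0
      have h1 : (a - a') • β = (b' - b) • α := sub_eq_zero.mp h0
      rw [← smul_smul, ← h1, smul_smul, inv_mul_cancel₀ (sub_ne_zero.mpr hne), one_smul]
    have NEα : ∀ a' b' : Kq, a' ≠ 0 → α ≠ a' • β + b' • α := by
      intro a' b' h
      have := NE 0 1 a' b' (Ne.symm h)
      rwa [zero_smul, zero_add, one_smul] at this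
    -- formulas for the four elements
    have ev2 : ρ (Ring.inverse (ha.T (cs.simple i))) α
        = (uu ^ 2)⁻¹ • β + (-((uu ^ 2)⁻¹ * (uu ^ 2 - 1))) • α := by rw [fI i α, ← hβ]
    have ev3 : ρ (Tcirc cs ha i) α
        = (uu + 1)⁻¹ • β + (-((uu + 1)⁻¹ * uu)) • α := by rw [fC i α, ← hβ]
    have ev4 : ρ (Ring.inverse (Tcirc cs ha i)) α
        = (uu ^ 2 - uu)⁻¹ • β + (-((uu ^ 2 - uu)⁻¹ * (uu ^ 2 - uu - 1))) • α := by
      rw [fCI i α, ← hβ]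
    -- the β-coefficients 1, (u²)⁻¹, (u+1)⁻¹, (u²-u)⁻¹ are distinct and nonzero
    have hA2 : ((uu ^ 2)⁻¹ : Kq) ≠ 0 := inv_ne_zero WDigraphAux.hu2
    have hA3 : ((uu + 1)⁻¹ : Kq) ≠ 0 := inv_ne_zero WDigraphAux.hu1
    have hA4 : ((uu ^ 2 - uu)⁻¹ : Kq) ≠ 0 := inv_ne_zero WDigraphAux.huu
    have h12 : (1 : Kq) ≠ (uu ^ 2)⁻¹ := by
      rw [← inv_one]
      refine WDigraphAux.inv_ne_inv ?_
      intro h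
      exact WDigraphAux.h21 (by linear_combination -h)
    have h13 : (1 : Kq) ≠ (uu + 1)⁻¹ := by
      rw [← inv_one]
      refine WDigraphAux.inv_ne_inv ?_
      intro h
      exact WDigraphAux.hu0 (by linear_combination -h)
    have h14 : (1 : Kq) ≠ (uu ^ 2 - uu)⁻¹ := by
      rw [← inv_one]
      refine WDigraphAux.inv_ne_inv ?_
      intro h
      exact WDigraphAux.h211 (by linear_combination -h)
    have h23 : ((uu ^ 2)⁻¹ : Kq) ≠ (uu + 1)⁻¹ := by
      refine WDigraphAux.inv_ne_inv ?_
      intro h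
      exact WDigraphAux.h211 (by linear_combination h)
    have h24 : ((uu ^ 2)⁻¹ : Kq) ≠ (uu ^ 2 - uu)⁻¹ := by
      refine WDigraphAux.inv_ne_inv ?_
      intro h
      exact WDigraphAux.hu0 (by linear_combination h)
    have h34 : ((uu + 1)⁻¹ : Kq) ≠ (uu ^ 2 - uu)⁻¹ := by
      refine WDigraphAux.inv_ne_inv ?_
      intro h
      exact WDigraphAux.h221 (by linear_combination -h)
    -- the ten inequalities
    have n01 : α ≠ β := by
      have := NEα 1 0 one_ne_zero
      rwa [one_smul, zero_smul, add_zero] at this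
    have n02 : α ≠ ρ (Ring.inverse (ha.T (cs.simple i))) α := by
      rw [ev2]; exact NEα _ _ hA2
    have n03 : α ≠ ρ (Tcirc cs ha i) α := by
      rw [ev3]; exact NEα _ _ hA3
    have n04 : α ≠ ρ (Ring.inverse (Tcirc cs ha i)) α := by
      rw [ev4]; exact NEα _ _ hA4
    have n12 : β ≠ ρ (Ring.inverse (ha.T (cs.simple i))) α := by
      rw [ev2]
      have := NE 1 0 ((uu ^ 2)⁻¹) (-((uu ^ 2)⁻¹ * (uu ^ 2 - 1))) h12
      rwa [one_smul, zero_smul, add_zero] at this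
    have n13 : β ≠ ρ (Tcirc cs ha i) α := by
      rw [ev3]
      have := NE 1 0 ((uu + 1)⁻¹) (-((uu + 1)⁻¹ * uu)) h13
      rwa [one_smul, zero_smul, add_zero] at this
    have n14 : β ≠ ρ (Ring.inverse (Tcirc cs ha i)) α := by
      rw [ev4]
      have := NE 1 0 ((uu ^ 2 - uu)⁻¹) (-((uu ^ 2 - uu)⁻¹ * (uu ^ 2 - uu - 1))) h14
      rwa [one_smul, zero_smul, add_zero] at this
    have n23 : ρ (Ring.inverse (ha.T (cs.simple i))) α ≠ ρ (Tcirc cs ha i) α := by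
      rw [ev2, ev3]; exact NE _ _ _ _ h23
    have n24 : ρ (Ring.inverse (ha.T (cs.simple i))) α
        ≠ ρ (Ring.inverse (Tcirc cs ha i)) α := by
      rw [ev2, ev4]; exact NE _ _ _ _ h24
    have n34 : ρ (Tcirc cs ha i) α ≠ ρ (Ring.inverse (Tcirc cs ha i)) α := by
      rw [ev3, ev4]; exact NE _ _ _ _ h34
    constructor
    · -- pairwise distinct
      refine List.Pairwise.cons ?_ (List.Pairwise.cons ?_ (List.Pairwise.cons ?_
        (List.Pairwise.cons ?_ (List.pairwise_singleton _ _))))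
      · intro x hx
        simp only [List.mem_cons, List.not_mem_nil, or_false] at hx
        rcases hx with rfl | rfl | rfl | rfl
        exacts [n01, n02, n03, n04]
      · intro x hx
        simp only [List.mem_cons, List.not_mem_nil, or_false] at hx
        rcases hx with rfl | rfl | rfl
        exacts [n12, n13, n14]
      · intro x hx
        simp only [List.mem_cons, List.not_mem_nil, or_false] at hx
        rcases hx with rfl | rfl
        exacts [n23, n24]
      · intro x hx
        simp only [List.mem_cons, List.not_mem_nil, or_false] at hx
        rcases hx with rfl
        exact n34
    · -- exactly one of the four lies in X
      -- two distinct combinations cannot both lie in X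
      have PF : ∀ a b a' b' : Kq, a ≠ 0 → a' ≠ 0 → a * b' - a' * b ≠ 0 →
          (a • β + b • α) ∈ X → (a' • β + b' • α) ∈ X → False := by
        intro a b a' b' ha0 ha0' hdet hxX hyX
        refine WDigraphAux.dep3 hli hxX hyX hα
          (Ne.symm (NEα a b ha0)) (Ne.symm (NEα a' b' ha0'))
          (c₁ := a') (c₂ := -a) (c₃ := a * b' - a' * b) hdet ?_
        rw [smul_add, smul_add, smul_smul, smul_smul, smul_smul, smul_smul]
        exact WDigraphAux.combo0 α β _ _ _ _ _ (by ring) (by ring)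
      -- determinant facts
      have d12 : (1 : Kq) * (-((uu ^ 2)⁻¹ * (uu ^ 2 - 1))) - (uu ^ 2)⁻¹ * 0 ≠ 0 := by
        rw [mul_zero, sub_zero, one_mul]
        exact neg_ne_zero.mpr (mul_ne_zero hA2 WDigraphAux.h21)
      have d13 : (1 : Kq) * (-((uu + 1)⁻¹ * uu)) - (uu + 1)⁻¹ * 0 ≠ 0 := by
        rw [mul_zero, sub_zero, one_mul]
        exact neg_ne_zero.mpr (mul_ne_zero hA3 WDigraphAux.hu0)
      have d14 : (1 : Kq) * (-((uu ^ 2 - uu)⁻¹ * (uu ^ 2 - uu - 1)))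
          - (uu ^ 2 - uu)⁻¹ * 0 ≠ 0 := by
        rw [mul_zero, sub_zero, one_mul]
        exact neg_ne_zero.mpr (mul_ne_zero hA4 WDigraphAux.h211)
      have d23 : (uu ^ 2)⁻¹ * (-((uu + 1)⁻¹ * uu))
          - (uu + 1)⁻¹ * (-((uu ^ 2)⁻¹ * (uu ^ 2 - 1))) ≠ 0 := by
        have e : (uu ^ 2)⁻¹ * (-((uu + 1)⁻¹ * uu))
            - (uu + 1)⁻¹ * (-((uu ^ 2)⁻¹ * (uu ^ 2 - 1)))
            = (uu ^ 2)⁻¹ * ((uu + 1)⁻¹ * (uu ^ 2 - uu - 1)) := by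
          field_simp
          ring
        rw [e]
        exact mul_ne_zero hA2 (mul_ne_zero hA3 WDigraphAux.h211)
      have d24 : (uu ^ 2)⁻¹ * (-((uu ^ 2 - uu)⁻¹ * (uu ^ 2 - uu - 1)))
          - (uu ^ 2 - uu)⁻¹ * (-((uu ^ 2)⁻¹ * (uu ^ 2 - 1))) ≠ 0 := by
        have e : (uu ^ 2)⁻¹ * (-((uu ^ 2 - uu)⁻¹ * (uu ^ 2 - uu - 1)))
            - (uu ^ 2 - uu)⁻¹ * (-((uu ^ 2)⁻¹ * (uu ^ 2 - 1)))
            = (uu ^ 2)⁻¹ * ((uu ^ 2 - uu)⁻¹ * uu) := by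
          have hu0' := WDigraphAux.hu0
          have h1 : uu - 1 ≠ 0 := fun h => WDigraphAux.huu (by linear_combination uu * h)
          field_simp
          ring
        rw [e]
        exact mul_ne_zero hA2 (mul_ne_zero hA4 WDigraphAux.hu0)
      have d34 : (uu + 1)⁻¹ * (-((uu ^ 2 - uu)⁻¹ * (uu ^ 2 - uu - 1)))
          - (uu ^ 2 - uu)⁻¹ * (-((uu + 1)⁻¹ * uu)) ≠ 0 := by
        have e : (uu + 1)⁻¹ * (-((uu ^ 2 - uu)⁻¹ * (uu ^ 2 - uu - 1)))
            - (uu ^ 2 - uu)⁻¹ * (-((uu + 1)⁻¹ * uu))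
            = -((uu + 1)⁻¹ * ((uu ^ 2 - uu)⁻¹ * (uu ^ 2 - 2 * uu - 1))) := by
          field_simp
          ring
        rw [e]
        exact neg_ne_zero.mpr (mul_ne_zero hA3 (mul_ne_zero hA4 WDigraphAux.h221))
      -- memberships in combination form
      have m1eq : (1 : Kq) • β + (0 : Kq) • α = β := by
        rw [one_smul, zero_smul, add_zero]
      rcases hmemX α hα i with hm | hm | hm | hm
      · refine ⟨β, ⟨hm, Set.mem_insert _ _⟩, ?_⟩
        rintro y ⟨hyX, hyS⟩
        simp only [Set.mem_insert_iff, Set.mem_singleton_iff] at hyS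
        rcases hyS with rfl | rfl | rfl | rfl
        · rfl
        · exact (PF 1 0 _ _ one_ne_zero hA2 d12
            (by rw [m1eq]; exact hm) (by rw [← ev2]; exact hyX)).elim
        · exact (PF 1 0 _ _ one_ne_zero hA3 d13
            (by rw [m1eq]; exact hm) (by rw [← ev3]; exact hyX)).elim
        · exact (PF 1 0 _ _ one_ne_zero hA4 d14
            (by rw [m1eq]; exact hm) (by rw [← ev4]; exact hyX)).elim
      · refine ⟨ρ (Ring.inverse (ha.T (cs.simple i))) α,
          ⟨hm, Set.mem_insert_of_mem _ (Set.mem_insert _ _)⟩, ?_⟩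
        rintro y ⟨hyX, hyS⟩
        simp only [Set.mem_insert_iff, Set.mem_singleton_iff] at hyS
        rcases hyS with rfl | rfl | rfl | rfl
        · exact (PF 1 0 _ _ one_ne_zero hA2 d12
            (by rw [m1eq]; exact hyX) (by rw [← ev2]; exact hm)).elim
        · rfl
        · exact (PF _ _ _ _ hA2 hA3 d23
            (by rw [← ev2]; exact hm) (by rw [← ev3]; exact hyX)).elim
        · exact (PF _ _ _ _ hA2 hA4 d24
            (by rw [← ev2]; exact hm) (by rw [← ev4]; exact hyX)).elim
      · refine ⟨ρ (Tcirc cs ha i) α,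
          ⟨hm, Set.mem_insert_of_mem _ (Set.mem_insert_of_mem _ (Set.mem_insert _ _))⟩, ?_⟩
        rintro y ⟨hyX, hyS⟩
        simp only [Set.mem_insert_iff, Set.mem_singleton_iff] at hyS
        rcases hyS with rfl | rfl | rfl | rfl
        · exact (PF 1 0 _ _ one_ne_zero hA3 d13
            (by rw [m1eq]; exact hyX) (by rw [← ev3]; exact hm)).elim
        · exact (PF _ _ _ _ hA2 hA3 d23
            (by rw [← ev2]; exact hyX) (by rw [← ev3]; exact hm)).elim
        · rfl
        · exact (PF _ _ _ _ hA3 hA4 d34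
            (by rw [← ev3]; exact hm) (by rw [← ev4]; exact hyX)).elim
      · refine ⟨ρ (Ring.inverse (Tcirc cs ha i)) α,
          ⟨hm, Set.mem_insert_of_mem _ (Set.mem_insert_of_mem _
            (Set.mem_insert_of_mem _ rfl))⟩, ?_⟩
        rintro y ⟨hyX, hyS⟩
        simp only [Set.mem_insert_iff, Set.mem_singleton_iff] at hyS
        rcases hyS with rfl | rfl | rfl | rfl
        · exact (PF 1 0 _ _ one_ne_zero hA4 d14
            (by rw [m1eq]; exact hyX) (by rw [← ev4]; exact hm)).elim
        · exact (PF _ _ _ _ hA2 hA4 d24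
            (by rw [← ev2]; exact hyX) (by rw [← ev4]; exact hm)).elim
        · exact (PF _ _ _ _ hA3 hA4 d34
            (by rw [← ev3]; exact hyX) (by rw [← ev4]; exact hm)).elim
        · rfl
  · -- part (ii)
    have hTspanX : ∀ (i : B), ∀ α ∈ X,
        ρ (ha.T (cs.simple i)) α ∈ Submodule.span Kq X := by
      intro i α hα
      rcases hmemX α hα i with h | h | h | h
      · exact Submodule.subset_span h
      · have e : ρ (ha.T (cs.simple i)) α
            = (uu ^ 2) • ρ (Ring.inverse (ha.T (cs.simple i))) α + (uu ^ 2 - 1) • α := by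
          rw [fI i α, smul_add, smul_smul, smul_smul,
            mul_inv_cancel₀ WDigraphAux.hu2, one_smul,
            show uu ^ 2 * -((uu ^ 2)⁻¹ * (uu ^ 2 - 1)) = -(uu ^ 2 - 1) from by
              rw [mul_neg, ← mul_assoc, mul_inv_cancel₀ WDigraphAux.hu2, one_mul],
            add_assoc, ← add_smul, neg_add_cancel, zero_smul, add_zero]
        rw [e]
        exact Submodule.add_mem _
          (Submodule.smul_mem _ _ (Submodule.subset_span h))
          (Submodule.smul_mem _ _ (Submodule.subset_span hα))
      · have e : ρ (ha.T (cs.simple i)) α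
            = (uu + 1) • ρ (Tcirc cs ha i) α + uu • α := by
          rw [fC i α, smul_add, smul_smul, smul_smul,
            mul_inv_cancel₀ WDigraphAux.hu1, one_smul,
            show (uu + 1) * -((uu + 1)⁻¹ * uu) = -uu from by
              rw [mul_neg, ← mul_assoc, mul_inv_cancel₀ WDigraphAux.hu1, one_mul],
            add_assoc, ← add_smul, neg_add_cancel, zero_smul, add_zero]
        rw [e]
        exact Submodule.add_mem _
          (Submodule.smul_mem _ _ (Submodule.subset_span h))
          (Submodule.smul_mem _ _ (Submodule.subset_span hα))
      · have e : ρ (ha.T (cs.simple i)) α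
            = (uu ^ 2 - uu) • ρ (Ring.inverse (Tcirc cs ha i)) α
              + (uu ^ 2 - uu - 1) • α := by
          rw [fCI i α, smul_add, smul_smul, smul_smul,
            mul_inv_cancel₀ WDigraphAux.huu, one_smul,
            show (uu ^ 2 - uu) * -((uu ^ 2 - uu)⁻¹ * (uu ^ 2 - uu - 1))
              = -(uu ^ 2 - uu - 1) from by
              rw [mul_neg, ← mul_assoc, mul_inv_cancel₀ WDigraphAux.huu, one_mul],
            add_assoc, ← add_smul, neg_add_cancel, zero_smul, add_zero]
        rw [e]
        exact Submodule.add_mem _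
          (Submodule.smul_mem _ _ (Submodule.subset_span h))
          (Submodule.smul_mem _ _ (Submodule.subset_span hα))
    have hTspan : ∀ (i : B), ∀ v ∈ Submodule.span Kq X,
        ρ (ha.T (cs.simple i)) v ∈ Submodule.span Kq X := by
      intro i v hv
      induction hv using Submodule.span_induction with
      | mem x hx => exact hTspanX i x hx
      | zero => rw [map_zero]; exact Submodule.zero_mem _
      | add x y hx hy ihx ihy => rw [map_add]; exact Submodule.add_mem _ ihx ihy
      | smul c x hx ihx => rw [map_smul]; exact Submodule.smul_mem _ _ ihx
    have hTw : ∀ (n : ℕ) (w : W), cs.length w = n →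
        ∀ v ∈ Submodule.span Kq X, ρ (ha.T w) v ∈ Submodule.span Kq X := by
      intro n
      induction n using Nat.strong_induction_on with
      | _ n ih =>
        intro w hlen v hv
        by_cases hw : w = 1
        · subst hw
          rw [ha.T_one, map_one, Module.End.one_apply]
          exact hv
        · obtain ⟨i, hi⟩ := cs.exists_leftDescent_of_ne_one hw
          have hlen2 : cs.length (cs.simple i * w) < n := hlen ▸ hi
          have hmul : ha.T (cs.simple i) * ha.T (cs.simple i * w) = ha.T w := by
            have hlt : cs.length (cs.simple i * w)
                < cs.length (cs.simple i * (cs.simple i * w)) := by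
              rw [← mul_assoc, cs.simple_mul_simple_self, one_mul]
              exact hi
            have h0 := ha.T_mul_of_lt i (cs.simple i * w) hlt
            rwa [← mul_assoc, cs.simple_mul_simple_self, one_mul] at h0
          rw [← hmul, map_mul, Module.End.mul_apply]
          exact hTspan i _ (ih _ hlen2 _ rfl v hv)
    intro h v hv
    have hrep := ha.basis.linearCombination_repr h
    rw [← hrep, Finsupp.linearCombination_apply, Finsupp.sum, map_sum, LinearMap.sum_apply]
    refine Submodule.sum_mem _ (fun w hw => ?_)
    rw [map_smul, LinearMap.smul_apply, ha.basis_eq]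
    exact Submodule.smul_mem _ _ (hTw _ w rfl v hv)
end
end

section
/- Let (W,S) be a Coxeter system, H its Hecke algebra over ℚ(u), M an H-module, and X a linearly independent subset of M. Then X supports a W-digraph if and only if for each s ∈ S there exists a partition P_s of X such that every block U ∈ P_s has the form U = {α, β} with α ≠ β and either T_sα = β or T_s°α = β. -/
open Finsupp

set_option synthInstance.maxHeartbeats 1000000
set_option maxHeartbeats 1000000

noncomputable section

variable {B W : Type*} [Group W] {M : CoxeterMatrix B}
variable {H : Type*} [Ring H] [Algebra Kq H]

section AuxPartition

/-- Generic quadratic computation helper, stated over an arbitrary field since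
the `module` tactic works best there. -/
private lemma quad_helper {F R : Type*} [Field F] [Ring R] [Algebra F R] (u : F) (A : R)
    (hsq : A * A = (u ^ 2) • 1 + (u ^ 2 - 1) • A) :
    (A - u • 1) * (A - (u ^ 2 - u - 1) • 1) = (u ^ 3 - u) • 1 ∧
      (A - (u ^ 2 - u - 1) • 1) * (A - u • 1) = (u ^ 3 - u) • 1 := by
  constructor <;>
    (rw [sub_mul, mul_sub, mul_sub, hsq]
     simp only [mul_smul_comm, smul_mul_assoc, mul_one, one_mul, smul_smul]
     module)

private lemma eig_helper {F Mo : Type*} [Field F] [AddCommGroup Mo] [Module F Mo]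
    (x : Mo) (e u : F) (h : e • (e • x) = u ^ 2 • x + (u ^ 2 - 1) • (e • x)) :
    ((e - u ^ 2) * (e + 1)) • x = 0 := by
  linear_combination (norm := module) h

private lemma coeff4_helper {F Mo : Type*} [Field F] [AddCommGroup Mo] [Module F Mo]
    (u : F) (α β Tα : Mo)
    (h2 : (u + 1) • Tα + u • ((u + 1) • α + u • β)
        = u ^ 2 • β + (u ^ 2 - 1) • ((u + 1) • α + u • β)) :
    (u + 1) • ((u ^ 2 - u) • β) = (u + 1) • (Tα + (-(u ^ 2 - u - 1)) • α) := by
  linear_combination (norm := module) -h2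

private lemma comb_helper {F Mo : Type*} [Field F] [AddCommGroup Mo] [Module F Mo]
    (c₁ c₂ d₁ d₂ : F) (α β γ Tα : Mo)
    (e₁ : c₁ • β = Tα + d₁ • α) (e₂ : c₂ • γ = Tα + d₂ • α) :
    c₁ • β + (-c₂) • γ + (d₂ - d₁) • α = 0 := by
  linear_combination (norm := module) e₁ - e₂

variable {Mo : Type*} [AddCommGroup Mo] [Module Kq Mo]
variable (cs : CoxeterSystem M W) (ha : HeckeAlgebra cs H)
variable (ρ : H →ₐ[Kq] Module.End Kq Mo) (i : B)

private lemma poly_ne (p : Polynomial ℚ) (x : ℚ) (h : p.eval x ≠ 0) :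
    algebraMap (Polynomial ℚ) Kq p ≠ 0 := by
  intro h0
  have hp : p = 0 := RatFunc.algebraMap_injective ℚ (by simpa using h0)
  simp [hp] at h

private lemma kuu : uu = algebraMap (Polynomial ℚ) Kq Polynomial.X :=
  RatFunc.algebraMap_X.symm

private lemma uu_ne : uu ≠ 0 := RatFunc.X_ne_zero

private lemma two_ne : (2 : Kq) ≠ 0 := by
  rw [show (2 : Kq) = algebraMap (Polynomial ℚ) Kq 2 from (map_ofNat _ 2).symm]
  exact poly_ne 2 0 (by norm_num)

private lemma uu1_ne : uu + 1 ≠ 0 := by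
  have := poly_ne (Polynomial.X + 1) 0 (by simp)
  simpa [kuu, map_add, map_one] using this

private lemma uum1_ne : uu - 1 ≠ 0 := by
  have := poly_ne (Polynomial.X - 1) 0 (by simp)
  simpa [kuu, map_sub, map_one] using this

private lemma uusq1_ne : uu ^ 2 - 1 ≠ 0 := by
  have := poly_ne (Polynomial.X ^ 2 - 1) 0 (by simp)
  simpa [kuu, map_sub, map_pow, map_one] using this

private lemma uu2u1_ne : uu ^ 2 - 2 * uu - 1 ≠ 0 := by
  have := poly_ne (Polynomial.X ^ 2 - 2 * Polynomial.X - 1) 0 (by simp)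
  simpa [kuu, map_sub, map_pow, map_mul, map_one, map_ofNat] using this

private lemma uusqmu_ne : uu ^ 2 - uu ≠ 0 := by
  have h : uu ^ 2 - uu = uu * (uu - 1) := by ring
  rw [h]; exact mul_ne_zero uu_ne uum1_ne

private lemma T_sq : ha.T (cs.simple i) * ha.T (cs.simple i)
    = (uu ^ 2) • (1 : H) + (uu ^ 2 - 1) • ha.T (cs.simple i) := by
  have hlen : cs.length (cs.simple i * cs.simple i) < cs.length (cs.simple i) := by
    rw [cs.simple_mul_simple_self, cs.length_one, cs.length_simple]; norm_num
  have h := ha.T_mul_of_gt i (cs.simple i) hlen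
  rwa [cs.simple_mul_simple_self, ha.T_one] at h

private lemma isUnit_of_quad (A : H) (a b : Kq) (ha0 : a ≠ 0)
    (h : A * A = a • 1 + b • A) : IsUnit A := by
  have key : A * (a⁻¹ • (A - b • 1)) = 1 := by
    rw [mul_smul_comm, mul_sub, h, mul_smul_comm, mul_one, add_sub_cancel_right,
      smul_smul, inv_mul_cancel₀ ha0, one_smul]
  have key' : (a⁻¹ • (A - b • 1)) * A = 1 := by
    rw [smul_mul_assoc, sub_mul, h, smul_mul_assoc, one_mul, add_sub_cancel_right,
      smul_smul, inv_mul_cancel₀ ha0, one_smul]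
  exact ⟨⟨A, a⁻¹ • (A - b • 1), key, key'⟩, rfl⟩

private lemma isUnit_T : IsUnit (ha.T (cs.simple i)) :=
  isUnit_of_quad _ _ _ (pow_ne_zero 2 uu_ne) (T_sq cs ha i)

private lemma isUnit_Tcirc : IsUnit (Tcirc cs ha i) := by
  have h3 : uu ^ 3 - uu = (uu + 1) * (uu ^ 2 - uu) := by ring
  have hne3 : uu ^ 3 - uu ≠ 0 := by rw [h3]; exact mul_ne_zero uu1_ne uusqmu_ne
  have hs : (uu + 1)⁻¹ * (uu ^ 2 - uu)⁻¹ * (uu ^ 3 - uu) = 1 := by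
    rw [← mul_inv, ← h3, inv_mul_cancel₀ hne3]
  have hs' : (uu ^ 2 - uu)⁻¹ * (uu + 1)⁻¹ * (uu ^ 3 - uu) = 1 := by
    rw [← mul_inv, mul_comm (uu ^ 2 - uu), ← h3, inv_mul_cancel₀ hne3]
  obtain ⟨hq1, hq2⟩ := quad_helper uu (ha.T (cs.simple i)) (T_sq cs ha i)
  refine ⟨⟨Tcirc cs ha i,
    (uu ^ 2 - uu)⁻¹ • (ha.T (cs.simple i) - (uu ^ 2 - uu - 1) • 1), ?_, ?_⟩, rfl⟩
  · rw [Tcirc, smul_mul_assoc, mul_smul_comm, hq1, smul_smul, smul_smul, hs, one_smul]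
  · rw [Tcirc, mul_smul_comm, smul_mul_assoc, hq2, smul_smul, smul_smul, hs, one_smul]

private lemma rho_sq (v : Mo) :
    ρ (ha.T (cs.simple i)) (ρ (ha.T (cs.simple i)) v)
      = (uu ^ 2) • v + (uu ^ 2 - 1) • ρ (ha.T (cs.simple i)) v := by
  have h := congrArg ρ (T_sq cs ha i)
  rw [map_mul, map_add, map_smul, map_smul, map_one] at h
  have h2 := LinearMap.congr_fun h v
  simpa [Module.End.mul_apply, LinearMap.add_apply, LinearMap.smul_apply,
    Module.End.one_apply] using h2

private lemma rho_circ (v : Mo) :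
    ρ (Tcirc cs ha i) v = (uu + 1)⁻¹ • (ρ (ha.T (cs.simple i)) v - uu • v) := by
  rw [Tcirc, map_smul, map_sub, map_smul, map_one]
  simp [LinearMap.smul_apply, LinearMap.sub_apply, Module.End.one_apply]

private lemma rho_T_invT (v : Mo) :
    ρ (ha.T (cs.simple i)) (ρ (Ring.inverse (ha.T (cs.simple i))) v) = v := by
  have h := congrArg ρ (Ring.mul_inverse_cancel _ (isUnit_T cs ha i))
  rw [map_mul, map_one] at h
  have h2 := LinearMap.congr_fun h v
  simpa [Module.End.mul_apply, Module.End.one_apply] using h2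

private lemma rho_invT_T (v : Mo) :
    ρ (Ring.inverse (ha.T (cs.simple i))) (ρ (ha.T (cs.simple i)) v) = v := by
  have h := congrArg ρ (Ring.inverse_mul_cancel _ (isUnit_T cs ha i))
  rw [map_mul, map_one] at h
  have h2 := LinearMap.congr_fun h v
  simpa [Module.End.mul_apply, Module.End.one_apply] using h2

private lemma rho_Tc_invTc (v : Mo) :
    ρ (Tcirc cs ha i) (ρ (Ring.inverse (Tcirc cs ha i)) v) = v := by
  have h := congrArg ρ (Ring.mul_inverse_cancel _ (isUnit_Tcirc cs ha i))
  rw [map_mul, map_one] at h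
  have h2 := LinearMap.congr_fun h v
  simpa [Module.End.mul_apply, Module.End.one_apply] using h2

private lemma rho_invTc_Tc (v : Mo) :
    ρ (Ring.inverse (Tcirc cs ha i)) (ρ (Tcirc cs ha i) v) = v := by
  have h := congrArg ρ (Ring.inverse_mul_cancel _ (isUnit_Tcirc cs ha i))
  rw [map_mul, map_one] at h
  have h2 := LinearMap.congr_fun h v
  simpa [Module.End.mul_apply, Module.End.one_apply] using h2

private lemma eig {α : Mo} (hα0 : α ≠ 0) {e : Kq}
    (h : ρ (ha.T (cs.simple i)) α = e • α) : e = uu ^ 2 ∨ e = -1 := by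
  have h2 := rho_sq cs ha ρ i α
  rw [h, map_smul, h] at h2
  have h3 : ((e - uu ^ 2) * (e + 1)) • α = 0 := eig_helper α e uu h2
  rcases mul_eq_zero.mp ((smul_eq_zero.mp h3).resolve_right hα0) with h4 | h4
  · exact Or.inl (sub_eq_zero.mp h4)
  · exact Or.inr (eq_neg_of_add_eq_zero_left h4)

/-- The "partner" relation for the label `i`. -/
private def PartnerP (α β : Mo) : Prop :=
  ρ (ha.T (cs.simple i)) α = β ∨ ρ (Tcirc cs ha i) α = β ∨
    ρ (ha.T (cs.simple i)) β = α ∨ ρ (Tcirc cs ha i) β = α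

private lemma partner_symm {α β : Mo} (h : PartnerP cs ha ρ i α β) :
    PartnerP cs ha ρ i β α := by
  unfold PartnerP at h ⊢; tauto

private lemma partner_coeff {α β : Mo} (h : PartnerP cs ha ρ i α β) :
    ∃ c d : Kq, c ≠ 0 ∧ c • β = ρ (ha.T (cs.simple i)) α + d • α := by
  rcases h with h | h | h | h
  · exact ⟨1, 0, one_ne_zero, by rw [one_smul, zero_smul, add_zero, h]⟩
  · refine ⟨uu + 1, -uu, uu1_ne, ?_⟩
    rw [← h, rho_circ, smul_smul, mul_inv_cancel₀ uu1_ne, one_smul, neg_smul, sub_eq_add_neg]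
  · have h2 := rho_sq cs ha ρ i β
    rw [h] at h2
    refine ⟨uu ^ 2, -(uu ^ 2 - 1), pow_ne_zero 2 uu_ne, ?_⟩
    rw [h2, neg_smul]
    abel
  · have hAβ : ρ (ha.T (cs.simple i)) β = (uu + 1) • α + uu • β := by
      rw [rho_circ] at h
      have h2 := congrArg (fun z : Mo => (uu + 1) • z) h
      simp only [smul_smul, mul_inv_cancel₀ uu1_ne, one_smul] at h2
      exact sub_eq_iff_eq_add.mp h2
    have h2 := rho_sq cs ha ρ i β
    rw [hAβ, map_add, map_smul, map_smul, hAβ] at h2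
    refine ⟨uu ^ 2 - uu, -(uu ^ 2 - uu - 1), uusqmu_ne, ?_⟩
    have key := coeff4_helper uu α β (ρ (ha.T (cs.simple i)) α) h2
    have key2 := congrArg (fun z : Mo => (uu + 1)⁻¹ • z) key
    simp only [smul_smul, ← mul_assoc, inv_mul_cancel₀ uu1_ne, one_mul, one_smul] at key2
    exact key2

private lemma T_fix_ne {α : Mo} (hα0 : α ≠ 0) : ρ (ha.T (cs.simple i)) α ≠ α := by
  intro h
  rcases eig cs ha ρ i hα0 (e := 1) (by rw [one_smul]; exact h) with h1 | h1
  · exact uusq1_ne (by linear_combination -h1)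
  · exact two_ne (by linear_combination h1)

private lemma Tc_fix_ne {α : Mo} (hα0 : α ≠ 0) : ρ (Tcirc cs ha i) α ≠ α := by
  intro h
  rw [rho_circ] at h
  have h2 : ρ (ha.T (cs.simple i)) α = (2 * uu + 1) • α := by
    have h3 := congrArg (fun z : Mo => (uu + 1) • z) h
    simp only [smul_smul, mul_inv_cancel₀ uu1_ne, one_smul] at h3
    have h4 := sub_eq_iff_eq_add.mp h3
    rw [← add_smul] at h4
    rw [show (2 * uu + 1 : Kq) = (uu + 1) + uu by ring]
    exact h4
  rcases eig cs ha ρ i hα0 h2 with h1 | h1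
  · exact uu2u1_ne (by linear_combination -h1)
  · have h4 : (2 : Kq) * (uu + 1) = 0 := by linear_combination h1
    exact mul_ne_zero two_ne uu1_ne h4

private lemma partner_uni {X : Set Mo}
    (hX : LinearIndependent Kq (fun x : X => (x : Mo)))
    {α β γ : Mo} (hαX : α ∈ X) (hβX : β ∈ X) (hγX : γ ∈ X)
    (hβα : β ≠ α) (hγα : γ ≠ α)
    (hb : PartnerP cs ha ρ i α β) (hc : PartnerP cs ha ρ i α γ) : β = γ := by
  classical
  by_contra hne
  obtain ⟨c₁, d₁, hc₁, e₁⟩ := partner_coeff cs ha ρ i hb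
  obtain ⟨c₂, d₂, hc₂, e₂⟩ := partner_coeff cs ha ρ i hc
  set l : X →₀ Kq := Finsupp.single ⟨β, hβX⟩ c₁ + Finsupp.single ⟨γ, hγX⟩ (-c₂)
      + Finsupp.single ⟨α, hαX⟩ (d₂ - d₁) with hl
  have hlc : Finsupp.linearCombination Kq (fun x : X => (x : Mo)) l = 0 := by
    rw [hl, map_add, map_add, Finsupp.linearCombination_single,
      Finsupp.linearCombination_single, Finsupp.linearCombination_single]
    exact comb_helper c₁ c₂ d₁ d₂ α β γ (ρ (ha.T (cs.simple i)) α) e₁ e₂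
  have hl0 := linearIndependent_iff.mp hX l hlc
  have hβγ : (⟨β, hβX⟩ : X) ≠ ⟨γ, hγX⟩ := by
    simp only [ne_eq, Subtype.mk.injEq]; exact hne
  have hβα' : (⟨β, hβX⟩ : X) ≠ ⟨α, hαX⟩ := by
    simp only [ne_eq, Subtype.mk.injEq]; exact hβα
  have hev := DFunLike.congr_fun hl0 (⟨β, hβX⟩ : X)
  rw [hl, Finsupp.add_apply, Finsupp.add_apply, Finsupp.single_eq_same,
    Finsupp.single_eq_of_ne hβγ, Finsupp.single_eq_of_ne hβα'] at hev
  simp at hev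
  exact hc₁ hev

end AuxPartition


/-- Lemma `partitions`.  A linearly independent subset `X`
of an `H`-module supports a `W`-digraph if and only if for each `s ∈ S` there
is a partition of `X` into blocks of the form `{α, β}` with `α ≠ β` and
`T_s α = β` or `T_s° α = β`. -/
theorem supports_wdigraph_iff_partitions {Mo : Type*}
    [AddCommGroup Mo] [Module Kq Mo]
    (cs : CoxeterSystem M W) (ha : HeckeAlgebra cs H)
    (ρ : H →ₐ[Kq] Module.End Kq Mo) (X : Set Mo)
    (hX : LinearIndependent Kq (fun x : X => (x : Mo))) :
    SupportsWDigraph cs ha ρ X ↔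
      ∀ i : B, ∃ P : Set (Set Mo),
        ⋃₀ P = X ∧
        (∀ U ∈ P, ∀ U' ∈ P, U ≠ U' → Disjoint U U') ∧
        (∀ U ∈ P, ∃ α β : Mo, α ≠ β ∧ U = {α, β} ∧
          (ρ (ha.T (cs.simple i)) α = β ∨ ρ (Tcirc cs ha i) α = β)) := by
  
  classical
  constructor
  · rintro ⟨-, hsup⟩ i
    have exPart : ∀ α ∈ X, ∃ β ∈ X, β ≠ α ∧ PartnerP cs ha ρ i α β := by
      intro α hα
      have hα0 : α ≠ 0 := hX.ne_zero ⟨α, hα⟩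
      rcases hsup α hα i with h | h | h | h
      · exact ⟨_, h, T_fix_ne cs ha ρ i hα0, Or.inl rfl⟩
      · refine ⟨_, h, ?_, Or.inr (Or.inr (Or.inl (rho_T_invT cs ha ρ i α)))⟩
        intro heq
        have h2 := rho_T_invT cs ha ρ i α
        rw [heq] at h2
        exact T_fix_ne cs ha ρ i hα0 h2
      · exact ⟨_, h, Tc_fix_ne cs ha ρ i hα0, Or.inr (Or.inl rfl)⟩
      · refine ⟨_, h, ?_, Or.inr (Or.inr (Or.inr (rho_Tc_invTc cs ha ρ i α)))⟩
        intro heq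
        have h2 := rho_Tc_invTc cs ha ρ i α
        rw [heq] at h2
        exact Tc_fix_ne cs ha ρ i hα0 h2
    refine ⟨{U : Set Mo | ∃ a b : Mo, a ∈ X ∧ b ∈ X ∧ a ≠ b ∧
        (ρ (ha.T (cs.simple i)) a = b ∨ ρ (Tcirc cs ha i) a = b) ∧ U = {a, b}}, ?_, ?_, ?_⟩
    · ext x
      constructor
      · rintro ⟨U, ⟨a, b, haX, hbX, -, -, rfl⟩, hx⟩
        rcases hx with rfl | hx
        · exact haX
        · rw [Set.mem_singleton_iff] at hx; subst hx; exact hbX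
      · intro hx
        obtain ⟨β, hβX, hβne, hP⟩ := exPart x hx
        rcases hP with h | h | h | h
        · exact ⟨{x, β}, ⟨x, β, hx, hβX, fun hh => hβne hh.symm, Or.inl h, rfl⟩,
            Set.mem_insert _ _⟩
        · exact ⟨{x, β}, ⟨x, β, hx, hβX, fun hh => hβne hh.symm, Or.inr h, rfl⟩,
            Set.mem_insert _ _⟩
        · exact ⟨{β, x}, ⟨β, x, hβX, hx, hβne, Or.inl h, rfl⟩, by simp⟩
        · exact ⟨{β, x}, ⟨β, x, hβX, hx, hβne, Or.inr h, rfl⟩, by simp⟩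
    · rintro U ⟨a, b, haX, hbX, hab, hTab, rfl⟩ U' ⟨a', b', haX', hbX', hab', hTab', rfl⟩ hne
      rw [Set.disjoint_left]
      rintro x hxU hxU'
      apply hne
      have hPab : PartnerP cs ha ρ i a b := by
        rcases hTab with h | h
        · exact Or.inl h
        · exact Or.inr (Or.inl h)
      have hPab' : PartnerP cs ha ρ i a' b' := by
        rcases hTab' with h | h
        · exact Or.inl h
        · exact Or.inr (Or.inl h)
      simp only [Set.mem_insert_iff, Set.mem_singleton_iff] at hxU hxU'
      rcases hxU with rfl | rfl <;> rcases hxU' with rfl | rfl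
      · -- x = a = a'
        have hbb := partner_uni cs ha ρ i hX haX hbX hbX' (Ne.symm hab) (Ne.symm hab')
          hPab hPab'
        rw [hbb]
      · -- x = a = b'
        have hP2 : PartnerP cs ha ρ i x a' := partner_symm cs ha ρ i hPab'
        have hba' := partner_uni cs ha ρ i hX haX hbX haX' (Ne.symm hab) hab' hPab hP2
        rw [hba', Set.pair_comm]
      · -- x = b = a'
        have hP1 : PartnerP cs ha ρ i x a := partner_symm cs ha ρ i hPab
        have hab2 := partner_uni cs ha ρ i hX hbX haX hbX' hab (Ne.symm hab') hP1 hPab'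
        rw [Set.pair_comm, hab2]
      · -- x = b = b'
        have hP1 : PartnerP cs ha ρ i x a := partner_symm cs ha ρ i hPab
        have hP2 : PartnerP cs ha ρ i x a' := partner_symm cs ha ρ i hPab'
        have haa2 := partner_uni cs ha ρ i hX hbX haX haX' hab hab' hP1 hP2
        rw [haa2]
    · rintro U ⟨a, b, -, -, hab, hT, rfl⟩
      exact ⟨a, b, hab, rfl, hT⟩
  · intro h
    refine ⟨hX, fun α hα i => ?_⟩
    obtain ⟨P, hcov, -, hblocks⟩ := h i
    have hαU : α ∈ ⋃₀ P := by rw [hcov]; exact hα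
    obtain ⟨U, hUP, hαU⟩ := hαU
    obtain ⟨a, b, hab, rfl, hT⟩ := hblocks U hUP
    have haX : a ∈ X := by
      rw [← hcov]; exact ⟨_, hUP, Set.mem_insert _ _⟩
    have hbX : b ∈ X := by
      rw [← hcov]; exact ⟨_, hUP, by simp⟩
    simp only [Set.mem_insert_iff, Set.mem_singleton_iff] at hαU
    rcases hαU with rfl | rfl
    · rcases hT with h1 | h1
      · exact Or.inl (h1 ▸ hbX)
      · exact Or.inr (Or.inr (Or.inl (h1 ▸ hbX)))
    · rcases hT with h1 | h1
      · have h2 := rho_invT_T cs ha ρ i a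
        rw [h1] at h2
        exact Or.inr (Or.inl (h2 ▸ haX))
      · have h2 := rho_invTc_Tc cs ha ρ i a
        rw [h1] at h2
        exact Or.inr (Or.inr (Or.inr (h2 ▸ haX)))
end
end

section
/- Let (W,S) be a Coxeter system, Γ a W-digraph with vertex set X, and let the 0-Hecke algebra H_0 act on the ℚ-vector space M_0 with basis X by: a_s·α = β if Γ has an edge (solid or dashed) from α to β labeled s, and a_s·α = −α if the edge of Γ labeled s at α ends at α. Then: (i) for every α ∈ X and w ∈ W, either a_w·α ∈ X or −a_w·α ∈ X; (ii) for α, β ∈ X, there exists w ∈ W with β = a_w·α or β = −a_w·α if and only if there is a directed path in Γ from α to β. -/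
open Finsupp

set_option synthInstance.maxHeartbeats 1000000
set_option maxHeartbeats 1000000

noncomputable section

variable {B W : Type*} [Group W] {M : CoxeterMatrix B}
variable {H : Type*} [Ring H] [Algebra Kq H]

/-- The `0`-Hecke algebra of `(W,S)` over `ℚ`: a `ℚ`-algebra with basis
`{a_w : w ∈ W}` such that `a_1 = 1`, `a_s a_w = a_{sw}` if `ℓ(sw) > ℓ(w)`,
and `a_s a_w = -a_w` if `ℓ(sw) < ℓ(w)`. -/
structure ZeroHeckeAlgebra {B W : Type*} [Group W] {M : CoxeterMatrix B}
    (cs : CoxeterSystem M W) (H0 : Type*) [Ring H0] [Algebra ℚ H0] where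
  a : W → H0
  basis : Module.Basis W ℚ H0
  basis_eq : ∀ w, basis w = a w
  a_one : a 1 = 1
  a_mul_of_lt : ∀ (i : B) (w : W), cs.length w < cs.length (cs.simple i * w) →
    a (cs.simple i) * a w = a (cs.simple i * w)
  a_mul_of_gt : ∀ (i : B) (w : W), cs.length (cs.simple i * w) < cs.length w →
    a (cs.simple i) * a w = - a w

/-- `ρ0` is the representation of the `0`-Hecke algebra on `M₀` (the
`ℚ`-vector space with basis the vertex set of `Γ`) in which
`a_s · α = β` if `Γ` has an edge (solid or dashed) from `α` to `β` labeled
`s`, and `a_s · α = -α` if the edge of `Γ` labeled `s` at `α` ends at `α`. -/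
def ZeroHeckeRep {V H0 : Type*} [Ring H0] [Algebra ℚ H0]
    (cs : CoxeterSystem M W) (hz : ZeroHeckeAlgebra cs H0)
    (Γ : SLabeledDigraph V B)
    (ρ0 : H0 →ₐ[ℚ] Module.End ℚ (V →₀ ℚ)) : Prop :=
  ∀ (α β : V) (i : B) (d : Bool), Γ.Edge α β i d →
    ρ0 (hz.a (cs.simple i)) (single α (1 : ℚ)) = single β (1 : ℚ) ∧
    ρ0 (hz.a (cs.simple i)) (single β (1 : ℚ)) = - single β (1 : ℚ)

/-- Lemma `h0paths`.  Let `Γ` be a `W`-digraph with vertex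
set `X`, and let the `0`-Hecke algebra act on `M₀` as above.  Then:
(i) for every vertex `α` and `w ∈ W`, `a_w α ∈ X` or `-a_w α ∈ X`;
(ii) for vertices `α, β`, there is `w ∈ W` with `β = ±a_w α` if and only if
there is a directed path in `Γ` from `α` to `β`. -/
theorem zero_hecke_paths {V H0 : Type*} [Ring H0] [Algebra ℚ H0]
    (cs : CoxeterSystem M W) (ha : HeckeAlgebra cs H)
    (Γ : SLabeledDigraph V B) (hwd : IsWDigraph cs ha Γ)
    (hz : ZeroHeckeAlgebra cs H0)
    (ρ0 : H0 →ₐ[ℚ] Module.End ℚ (V →₀ ℚ)) (hρ0 : ZeroHeckeRep cs hz Γ ρ0) :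
    (∀ (α : V) (w : W), ∃ β : V,
      ρ0 (hz.a w) (single α (1 : ℚ)) = single β (1 : ℚ) ∨
      ρ0 (hz.a w) (single α (1 : ℚ)) = - single β (1 : ℚ)) ∧
    (∀ α β : V,
      (∃ w : W,
        ρ0 (hz.a w) (single α (1 : ℚ)) = single β (1 : ℚ) ∨
        ρ0 (hz.a w) (single α (1 : ℚ)) = - single β (1 : ℚ)) ↔
      Relation.ReflTransGen Γ.DAdj α β) := by
  classical
  -- `single β 1 ≠ - single γ 1` always
  have hne : ∀ β γ : V, (single β (1:ℚ) : V →₀ ℚ) ≠ - single γ (1:ℚ) := by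
    intro β γ h
    have := congrArg (fun f : V →₀ ℚ => f β) h
    simp only [Finsupp.neg_apply, Finsupp.single_apply] at this
    split_ifs at this <;> norm_num at this
  have hinj : ∀ β γ : V, (single β (1:ℚ) : V →₀ ℚ) = single γ (1:ℚ) → β = γ := by
    intro β γ h
    by_contra hbg
    have := congrArg (fun f : V →₀ ℚ => f β) h
    simp [Finsupp.single_apply, hbg, Ne.symm hbg] at this
  -- the key dichotomy at each vertex and label
  have key : ∀ (β : V) (i : B),
      (∃ γ : V, Γ.DAdj β γ ∧
        ρ0 (hz.a (cs.simple i)) (single β (1:ℚ)) = single γ (1:ℚ)) ∨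
      ρ0 (hz.a (cs.simple i)) (single β (1:ℚ)) = - single β (1:ℚ) := by
    intro β i
    obtain ⟨e, ⟨hinc, hedge⟩, _⟩ := Γ.unique_edge β i
    rcases hinc with h1 | h2
    · subst h1
      exact Or.inl ⟨e.2.1, ⟨i, e.2.2, hedge⟩, (hρ0 e.1 e.2.1 i e.2.2 hedge).1⟩
    · subst h2
      exact Or.inr ((hρ0 e.1 e.2.1 i e.2.2 hedge).2)
  -- if there is an edge from β labeled i, then `a_s` sends β to its head
  have edgeact : ∀ (β γ : V) (i : B) (d : Bool), Γ.Edge β γ i d →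
      ρ0 (hz.a (cs.simple i)) (single β (1:ℚ)) = single γ (1:ℚ) :=
    fun β γ i d h => (hρ0 β γ i d h).1
  -- main strengthened claim
  have main : ∀ (n : ℕ) (w : W), cs.length w ≤ n → ∀ α : V, ∃ β : V,
      Relation.ReflTransGen Γ.DAdj α β ∧
      (ρ0 (hz.a w) (single α (1:ℚ)) = single β (1:ℚ) ∨
       ρ0 (hz.a w) (single α (1:ℚ)) = - single β (1:ℚ)) := by
    intro n
    induction n with
    | zero =>
      intro w hw α
      have hw1 : w = 1 := cs.length_eq_zero_iff.mp (Nat.le_zero.mp hw)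
      subst hw1
      refine ⟨α, Relation.ReflTransGen.refl, Or.inl ?_⟩
      rw [hz.a_one, map_one]; rfl
    | succ n ih =>
      intro w hw α
      by_cases hw1 : w = 1
      · subst hw1
        refine ⟨α, Relation.ReflTransGen.refl, Or.inl ?_⟩
        rw [hz.a_one, map_one]; rfl
      · obtain ⟨i, hd⟩ := cs.exists_leftDescent_of_ne_one hw1
        set w' := cs.simple i * w with hw'
        have hww : cs.simple i * w' = w := by
          rw [hw', ← mul_assoc, cs.simple_mul_simple_self, one_mul]
        have hlt : cs.length w' < cs.length w := hd
        obtain ⟨β', hpath, hcase⟩ := ih w' (by omega) α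
        have hmul : hz.a (cs.simple i) * hz.a w' = hz.a w := by
          have := hz.a_mul_of_lt i w' (by rw [hww]; exact hd)
          rwa [hww] at this
        have happ : ρ0 (hz.a w) (single α (1:ℚ))
            = ρ0 (hz.a (cs.simple i)) (ρ0 (hz.a w') (single α (1:ℚ))) := by
          rw [← hmul, map_mul]; rfl
        rcases key β' i with ⟨γ, hadj, hact⟩ | hact
        · refine ⟨γ, hpath.tail hadj, ?_⟩
          rcases hcase with h | h
          · left; rw [happ, h, hact]
          · right; rw [happ, h, map_neg, hact]
        · refine ⟨β', hpath, ?_⟩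
          rcases hcase with h | h
          · right; rw [happ, h, hact]
          · left; rw [happ, h, map_neg, hact, neg_neg]
  constructor
  · intro α w
    obtain ⟨β, _, h⟩ := main (cs.length w) w le_rfl α
    exact ⟨β, h⟩
  · intro α β
    constructor
    · rintro ⟨w, hw⟩
      obtain ⟨β', hpath, h'⟩ := main (cs.length w) w le_rfl α
      rcases hw with hw | hw <;> rcases h' with h' | h'
      · rwa [hinj β β' (hw.symm.trans h')]
      · exact absurd (hw.symm.trans h') (hne β β')
      · exact absurd (h'.symm.trans hw) (hne β' β)
      · rwa [hinj β β' (neg_injective (hw.symm.trans h'))]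
    · intro hpath
      induction hpath with
      | refl =>
        refine ⟨1, Or.inl ?_⟩
        rw [hz.a_one, map_one]; rfl
      | tail hab hadj ihp =>
        rename_i b c
        obtain ⟨w, hw⟩ := ihp
        obtain ⟨i, d, hedge⟩ := hadj
        have hact : ρ0 (hz.a (cs.simple i)) (single b (1:ℚ)) = single c (1:ℚ) :=
          edgeact b c i d hedge
        rcases cs.length_simple_mul w i with hlen | hlen
        · -- length goes up: a_s * a_w = a_{sw}
          have hmul : hz.a (cs.simple i) * hz.a w = hz.a (cs.simple i * w) :=
            hz.a_mul_of_lt i w (by omega)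
          refine ⟨cs.simple i * w, ?_⟩
          have happ : ρ0 (hz.a (cs.simple i * w)) (single α (1:ℚ))
              = ρ0 (hz.a (cs.simple i)) (ρ0 (hz.a w) (single α (1:ℚ))) := by
            rw [← hmul, map_mul]; rfl
          rcases hw with h | h
          · left; rw [happ, h, hact]
          · right; rw [happ, h, map_neg, hact]
        · -- length goes down: contradiction with the edge from b
          exfalso
          have hmul : hz.a (cs.simple i) * hz.a w = - hz.a w :=
            hz.a_mul_of_gt i w (by omega)
          have happ : ρ0 (hz.a (cs.simple i)) (ρ0 (hz.a w) (single α (1:ℚ)))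
              = - ρ0 (hz.a w) (single α (1:ℚ)) := by
            have := congrArg (fun x => ρ0 x (single α (1:ℚ))) hmul
            simpa [map_mul, map_neg] using this
          rcases hw with h | h
          · rw [h, hact] at happ
            exact hne c b happ
          · rw [h, map_neg, hact] at happ
            exact hne c b (neg_injective happ)
end
end
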